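/- arXiv:2012.14992 — 3 statements merged into one kernel-verified Lean document; each statement's English description precedes it below -/
import Mathlib

section
/- Let F_1, …, F_n be pairwise disjoint matchings of size n in a graph, and let R be a rainbow matching of maximum size. For e ∈ R let deg(e) be the number of unrepresented matchings F_i for which e is half-F_i-wasteful, and let D = {e ∈ R : deg(e) ≥ 5}. Then there exist sets S(e) ⊆ R for e ∈ D such that: (1) |S(e)| ≥ deg(e)/2; (2) every f ∈ S(e) satisfies deg(f) ≤ 2; and (3) S(e) ∩ S(e') = ∅ whenever e, e' ∈ D are distinct. -/
/-- Two graph edges intersect (share a vertex). -/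
def Meets {V : Type*} (e f : Sym2 V) : Prop := ∃ v, v ∈ e ∧ v ∈ f

/-- `g` intersects `e` and no other edge of the matching `R`. -/
def MeetsOnly {V : Type*} (R : Finset (Sym2 V)) (g e : Sym2 V) : Prop :=
  Meets g e ∧ ∀ f ∈ R, f ≠ e → ¬ Meets g f

/-- The pair `{e, f}` of edges of `R` is half-`A`-wasteful: there are edges
`g_e, g_f, g_{ef} ∈ A` such that `g_e` intersects `e` and no other edge of `R`, `g_f`
intersects `f` and no other edge of `R`, and `g_{ef}` intersects both `e` and `f`. -/
def HalfWastefulPair {V : Type*} (R A : Finset (Sym2 V)) (e f : Sym2 V) : Prop :=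
  ∃ ge ∈ A, ∃ gf ∈ A, ∃ gef ∈ A,
    MeetsOnly R ge e ∧ MeetsOnly R gf f ∧ Meets gef e ∧ Meets gef f

/-- The edge `e ∈ R` is half-`A`-wasteful: some pair `{e, f}` with `f ∈ R` is
half-`A`-wasteful. -/
def HalfWasteful {V : Type*} (R A : Finset (Sym2 V)) (e : Sym2 V) : Prop :=
  ∃ f ∈ R, f ≠ e ∧ HalfWastefulPair R A e f

/-- The number of unrepresented matchings `F i` (i.e. `i ∉ I`) for which `e` is
half-`F i`-wasteful. -/
noncomputable def hwDeg {V : Type*} {n : ℕ} (F : Fin n → Finset (Sym2 V))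
    (I : Finset (Fin n)) (R : Finset (Sym2 V)) (e : Sym2 V) : ℕ :=
  {i : Fin n | i ∉ I ∧ HalfWasteful R (F i) e}.ncard

/-- Bundled context for Statement 16. -/
structure Ctx {V : Type*} (G : SimpleGraph V) (n : ℕ) (F : Fin n → Finset (Sym2 V))
    (I : Finset (Fin n)) (c : Fin n → Sym2 V) : Prop where
  hedges : ∀ i, ∀ e ∈ F i, e ∈ G.edgeSet
  hmatch : ∀ i, ∀ e ∈ F i, ∀ f ∈ F i, e ≠ f → ∀ v, v ∈ e → v ∉ f
  hdisjF : ∀ i j, i ≠ j → Disjoint (F i) (F j)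
  hc : ∀ i ∈ I, c i ∈ F i
  hdisj : ∀ i ∈ I, ∀ j ∈ I, i ≠ j → ∀ v, v ∈ c i → v ∉ c j
  hmax : ∀ (J : Finset (Fin n)) (d : Fin n → Sym2 V),
      (∀ i ∈ J, d i ∈ F i) →
      (∀ i ∈ J, ∀ j ∈ J, i ≠ j → ∀ v, v ∈ d i → v ∉ d j) →
      J.card ≤ I.card

set_option linter.unusedSectionVars false
namespace Ctx
variable {V : Type*} [DecidableEq V] {G : SimpleGraph V} {n : ℕ}
  {F : Fin n → Finset (Sym2 V)} {I : Finset (Fin n)} {c : Fin n → Sym2 V}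
  (C : Ctx G n F I c)
include C

theorem cinj {j j' : Fin n} (hj : j ∈ I) (hj' : j' ∈ I) (h : c j = c j') : j = j' := by
  by_contra hne
  exact C.hdisj j hj j' hj' hne (c j).out.1 (Sym2.out_fst_mem _) (h ▸ Sym2.out_fst_mem _)

theorem nondiag {i : Fin n} {g : Sym2 V} (hg : g ∈ F i) : ¬ g.IsDiag :=
  G.not_isDiag_of_mem_edgeSet (C.hedges i g hg)

theorem mem_R {e : Sym2 V} (he : e ∈ I.image c) : ∃ j ∈ I, c j = e := by
  simpa using Finset.mem_image.mp he

/-- anatomy of an edge `g ∈ F i` (`i ∉ I`) meeting only `c j` in `R`: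
`g = s(x, z)` with `x ∈ c j` and `z` free. -/
theorem anatomy {i : Fin n} (hi : i ∉ I) {g : Sym2 V} (hg : g ∈ F i)
    {j : Fin n} (hj : j ∈ I) (ho : MeetsOnly (I.image c) g (c j)) :
    ∃ x z, g = s(x, z) ∧ x ∈ c j ∧ z ∉ c j ∧ (∀ j' ∈ I, z ∉ c j') := by
  obtain ⟨x, hx, hxj⟩ := ho.1
  refine ⟨x, Sym2.Mem.other hx, (Sym2.other_spec hx).symm, hxj, ?_⟩
  set z := Sym2.Mem.other hx with hz
  have hzg : z ∈ g := Sym2.other_mem hx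
  have hzj : z ∉ c j := by
    intro hzcj
    -- both endpoints of g in (c j): then g = c j, impossible since F's disjoint
    have hgeq : g = c j := by
      obtain ⟨p, q, hpq⟩ : ∃ p q, c j = s(p, q) := ⟨(c j).out.1, (c j).out.2, ((c j).out_eq).symm⟩
      rw [hpq] at hxj hzcj
      have hxz : x ≠ z := by
        intro h
        exact C.nondiag hg (by rw [← Sym2.other_spec hx, ← hz, ← h, Sym2.mk_isDiag_iff])
      have hpqne : p ≠ q := by
        intro h; exact C.nondiag (C.hc j hj) (by rw [hpq, Sym2.mk_isDiag_iff]; exact h)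
      rw [← Sym2.other_spec hx, ← hz, hpq]
      rcases Sym2.mem_iff.mp hxj with rfl | rfl <;> rcases Sym2.mem_iff.mp hzcj with h2 | h2
      · exact absurd h2.symm hxz
      · rw [h2]
      · rw [h2, Sym2.eq_swap]
      · exact absurd h2.symm hxz
    have : g ∈ F j := hgeq ▸ C.hc j hj
    have hij : i ≠ j := fun h => hi (h ▸ hj)
    exact (Finset.disjoint_left.mp (C.hdisjF i j hij) hg) this
  refine ⟨hzj, fun j' hj' hzj' => ?_⟩
  by_cases hjj : j' = j
  · exact hzj (hjj ▸ hzj')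
  · have hne : c j' ≠ c j := fun h => hjj (C.cinj hj' hj h)
    exact ho.2 (c j') (Finset.mem_image_of_mem c hj') hne ⟨z, hzg, hzj'⟩


theorem aug (T P : Finset (Fin n)) (hT : T ⊆ I)
    (g : Fin n → Sym2 V) (hPI : ∀ i ∈ P, i ∉ I) (hgF : ∀ i ∈ P, g i ∈ F i)
    (hgg : ∀ i ∈ P, ∀ i' ∈ P, i ≠ i' → ∀ v, v ∈ g i → v ∉ g i')
    (hgc : ∀ i ∈ P, ∀ j ∈ I, j ∉ T → ∀ v, v ∈ g i → v ∉ c j)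
    (hcard : T.card < P.card) : False := by
  classical
  set J : Finset (Fin n) := (I \ T) ∪ P with hJ
  set d : Fin n → Sym2 V := fun k => if k ∈ P then g k else c k with hd
  have hPI' : Disjoint (I \ T) P := by
    rw [Finset.disjoint_right]
    intro i hiP hiI
    exact hPI i hiP (Finset.mem_sdiff.mp hiI).1
  have hdF : ∀ i ∈ J, d i ∈ F i := by
    intro i hi
    rcases Finset.mem_union.mp hi with h | h
    · have : i ∉ P := Finset.disjoint_left.mp hPI' h
      simp only [hd, if_neg this]
      exact C.hc i (Finset.mem_sdiff.mp h).1
    · simp only [hd, if_pos h]; exact hgF i h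
  have hdd : ∀ i ∈ J, ∀ j ∈ J, i ≠ j → ∀ v, v ∈ d i → v ∉ d j := by
    intro i hi j hj hij v hvi
    rcases Finset.mem_union.mp hi with h1 | h1 <;> rcases Finset.mem_union.mp hj with h2 | h2
    · have n1 : i ∉ P := Finset.disjoint_left.mp hPI' h1
      have n2 : j ∉ P := Finset.disjoint_left.mp hPI' h2
      simp only [hd, if_neg n1] at hvi
      simp only [hd, if_neg n2]
      exact C.hdisj i (Finset.mem_sdiff.mp h1).1 j (Finset.mem_sdiff.mp h2).1 hij v hvi
    · have n1 : i ∉ P := Finset.disjoint_left.mp hPI' h1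
      simp only [hd, if_neg n1] at hvi
      simp only [hd, if_pos h2]
      intro hvj
      exact hgc j h2 i (Finset.mem_sdiff.mp h1).1 (Finset.mem_sdiff.mp h1).2 v hvj hvi
    · have n2 : j ∉ P := Finset.disjoint_left.mp hPI' h2
      simp only [hd, if_pos h1] at hvi
      simp only [hd, if_neg n2]
      exact hgc i h1 j (Finset.mem_sdiff.mp h2).1 (Finset.mem_sdiff.mp h2).2 v hvi
    · simp only [hd, if_pos h1] at hvi
      simp only [hd, if_pos h2]
      exact hgg i h1 j h2 hij v hvi
  have hcardJ : J.card = I.card - T.card + P.card := by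
    rw [hJ, Finset.card_union_of_disjoint hPI', Finset.card_sdiff_of_subset hT]
  have hTI : T.card ≤ I.card := Finset.card_le_card hT
  exact absurd (C.hmax J d hdF hdd) (by omega)

theorem aug2 {j1 i1 i2 : Fin n}
    (hj1 : j1 ∈ I)
    (hi1 : i1 ∉ I)
    (hi2 : i2 ∉ I)
    (h12 : i1 ≠ i2)
    {g1 g2 : Sym2 V}
    (hg1 : g1 ∈ F i1)
    (hg2 : g2 ∈ F i2)
    (hd12 : ∀ v, v ∈ g1 → v ∉ g2)
    (hav1 : ∀ j' ∈ I, j' ≠ j1 → ∀ v, v ∈ g1 → v ∉ c j')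
    (hav2 : ∀ j' ∈ I, j' ≠ j1 → ∀ v, v ∈ g2 → v ∉ c j') : False := by
  classical
  refine C.aug {j1} {i1, i2} (by intro x hx; simp only [Finset.mem_insert, Finset.mem_singleton] at hx; subst hx; assumption)
    (fun k => if k = i1 then g1 else g2) ?_ ?_ ?_ ?_ ?_
  · intro i hi; simp only [Finset.mem_insert, Finset.mem_singleton] at hi
    rcases hi with rfl|rfl <;> assumption
  · intro i hi; simp only [Finset.mem_insert, Finset.mem_singleton] at hi
    rcases hi with rfl|rfl
    · simp only [if_pos rfl]; exact hg1
    · simp only [if_neg (Ne.symm h12)]; exact hg2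
  · intro i hi i' hi' hne v hv
    simp only [Finset.mem_insert, Finset.mem_singleton] at hi hi'
    rcases hi with rfl|rfl <;> rcases hi' with rfl|rfl
    · exact absurd rfl hne
    · simp only [if_pos rfl] at hv
      simp only [if_neg (Ne.symm h12)]
      exact hd12 v hv
    · simp only [if_neg (Ne.symm h12)] at hv
      simp only [if_pos rfl]
      intro h; exact hd12 v h hv
    · exact absurd rfl hne
  · intro i hi j' hj' hjT v hv
    simp only [Finset.mem_insert, Finset.mem_singleton, not_or] at hjT
    simp only [Finset.mem_insert, Finset.mem_singleton] at hi
    rcases hi with rfl|rfl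
    · simp only [if_pos rfl] at hv
      exact hav1 j' hj' hjT v hv
    · simp only [if_neg (Ne.symm h12)] at hv
      exact hav2 j' hj' hjT v hv
  · have hP : ({i1, i2} : Finset (Fin n)).card = 2 := by
      rw [Finset.card_insert_of_notMem (by simp [h12]), Finset.card_singleton]
    have hTs : ({j1} : Finset (Fin n)).card = 1 := Finset.card_singleton _
    omega

/-- two edges from distinct unrepresented matchings, each meeting only `c j`, intersect. -/
theorem only_meets {j : Fin n} (hj : j ∈ I) {i₁ i₂ : Fin n} (h1 : i₁ ∉ I) (h2 : i₂ ∉ I)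
    (h12 : i₁ ≠ i₂) {g₁ g₂ : Sym2 V} (hg1 : g₁ ∈ F i₁) (hg2 : g₂ ∈ F i₂)
    (ho1 : MeetsOnly (I.image c) g₁ (c j)) (ho2 : MeetsOnly (I.image c) g₂ (c j)) :
    Meets g₁ g₂ := by
  by_contra hm
  refine C.aug2 hj h1 h2 h12 hg1 hg2 (fun v hv hv' => hm ⟨v, hv, hv'⟩) ?_ ?_
  · intro j' hj' hne v hv hv'
    have : c j' ≠ c j := fun h => hne (C.cinj hj' hj h)
    exact ho1.2 (c j') (Finset.mem_image_of_mem c hj') this ⟨v, hv, hv'⟩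
  · intro j' hj' hne v hv hv'
    have : c j' ≠ c j := fun h => hne (C.cinj hj' hj h)
    exact ho2.2 (c j') (Finset.mem_image_of_mem c hj') this ⟨v, hv, hv'⟩

/-- remove 2 edges, add 3 pairwise disjoint ones from distinct unrepresented matchings. -/
theorem aug3 {j1 j2 i1 i2 i3 : Fin n}
    (hj1 : j1 ∈ I)
    (hj2 : j2 ∈ I)
    (hi1 : i1 ∉ I)
    (hi2 : i2 ∉ I)
    (hi3 : i3 ∉ I)
    (h12 : i1 ≠ i2)
    (h13 : i1 ≠ i3)
    (h23 : i2 ≠ i3)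
    {g1 g2 g3 : Sym2 V}
    (hg1 : g1 ∈ F i1)
    (hg2 : g2 ∈ F i2)
    (hg3 : g3 ∈ F i3)
    (hd12 : ∀ v, v ∈ g1 → v ∉ g2)
    (hd13 : ∀ v, v ∈ g1 → v ∉ g3)
    (hd23 : ∀ v, v ∈ g2 → v ∉ g3)
    (hav1 : ∀ j' ∈ I, j' ≠ j1 → j' ≠ j2 → ∀ v, v ∈ g1 → v ∉ c j')
    (hav2 : ∀ j' ∈ I, j' ≠ j1 → j' ≠ j2 → ∀ v, v ∈ g2 → v ∉ c j')
    (hav3 : ∀ j' ∈ I, j' ≠ j1 → j' ≠ j2 → ∀ v, v ∈ g3 → v ∉ c j') : False := by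
  classical
  refine C.aug {j1, j2} {i1, i2, i3} (by intro x hx; simp only [Finset.mem_insert, Finset.mem_singleton] at hx; rcases hx with rfl|rfl <;> assumption)
    (fun k => if k = i1 then g1 else if k = i2 then g2 else g3) ?_ ?_ ?_ ?_ ?_
  · intro i hi; simp only [Finset.mem_insert, Finset.mem_singleton] at hi
    rcases hi with rfl|rfl|rfl <;> assumption
  · intro i hi; simp only [Finset.mem_insert, Finset.mem_singleton] at hi
    rcases hi with rfl|rfl|rfl
    · simp only [if_pos rfl]; exact hg1
    · simp only [if_neg (Ne.symm h12), if_pos rfl]; exact hg2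
    · simp only [if_neg (Ne.symm h13), if_neg (Ne.symm h23)]; exact hg3
  · intro i hi i' hi' hne v hv
    simp only [Finset.mem_insert, Finset.mem_singleton] at hi hi'
    rcases hi with rfl|rfl|rfl <;> rcases hi' with rfl|rfl|rfl
    · exact absurd rfl hne
    · simp only [if_pos rfl] at hv
      simp only [if_neg (Ne.symm h12), if_pos rfl]
      exact hd12 v hv
    · simp only [if_pos rfl] at hv
      simp only [if_neg (Ne.symm h13), if_neg (Ne.symm h23)]
      exact hd13 v hv
    · simp only [if_neg (Ne.symm h12), if_pos rfl] at hv
      simp only [if_pos rfl]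
      intro h; exact hd12 v h hv
    · exact absurd rfl hne
    · simp only [if_neg (Ne.symm h12), if_pos rfl] at hv
      simp only [if_neg (Ne.symm h13), if_neg (Ne.symm h23)]
      exact hd23 v hv
    · simp only [if_neg (Ne.symm h13), if_neg (Ne.symm h23)] at hv
      simp only [if_pos rfl]
      intro h; exact hd13 v h hv
    · simp only [if_neg (Ne.symm h13), if_neg (Ne.symm h23)] at hv
      simp only [if_neg (Ne.symm h12), if_pos rfl]
      intro h; exact hd23 v h hv
    · exact absurd rfl hne
  · intro i hi j' hj' hjT v hv
    simp only [Finset.mem_insert, Finset.mem_singleton, not_or] at hjT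
    simp only [Finset.mem_insert, Finset.mem_singleton] at hi
    rcases hi with rfl|rfl|rfl
    · simp only [if_pos rfl] at hv
      obtain ⟨ht0, ht1⟩ := hjT
      exact hav1 j' hj' ht0 ht1 v hv
    · simp only [if_neg (Ne.symm h12), if_pos rfl] at hv
      obtain ⟨ht0, ht1⟩ := hjT
      exact hav2 j' hj' ht0 ht1 v hv
    · simp only [if_neg (Ne.symm h13), if_neg (Ne.symm h23)] at hv
      obtain ⟨ht0, ht1⟩ := hjT
      exact hav3 j' hj' ht0 ht1 v hv
  · have hP : ({i1, i2, i3} : Finset (Fin n)).card = 3 := by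
      rw [Finset.card_insert_of_notMem (by simp [h12, h13]), Finset.card_insert_of_notMem (by simp [h23]), Finset.card_singleton]
    have hT0 := Finset.card_insert_le j1 ({j2} : Finset (Fin n))
    have hTs : ({j2} : Finset (Fin n)).card = 1 := Finset.card_singleton _
    omega

/-- remove 3 edges, add 4 pairwise disjoint ones from distinct unrepresented matchings. -/
theorem aug4 {j1 j2 j3 i1 i2 i3 i4 : Fin n}
    (hj1 : j1 ∈ I)
    (hj2 : j2 ∈ I)
    (hj3 : j3 ∈ I)
    (hi1 : i1 ∉ I)
    (hi2 : i2 ∉ I)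
    (hi3 : i3 ∉ I)
    (hi4 : i4 ∉ I)
    (h12 : i1 ≠ i2)
    (h13 : i1 ≠ i3)
    (h14 : i1 ≠ i4)
    (h23 : i2 ≠ i3)
    (h24 : i2 ≠ i4)
    (h34 : i3 ≠ i4)
    {g1 g2 g3 g4 : Sym2 V}
    (hg1 : g1 ∈ F i1)
    (hg2 : g2 ∈ F i2)
    (hg3 : g3 ∈ F i3)
    (hg4 : g4 ∈ F i4)
    (hd12 : ∀ v, v ∈ g1 → v ∉ g2)
    (hd13 : ∀ v, v ∈ g1 → v ∉ g3)
    (hd14 : ∀ v, v ∈ g1 → v ∉ g4)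
    (hd23 : ∀ v, v ∈ g2 → v ∉ g3)
    (hd24 : ∀ v, v ∈ g2 → v ∉ g4)
    (hd34 : ∀ v, v ∈ g3 → v ∉ g4)
    (hav1 : ∀ j' ∈ I, j' ≠ j1 → j' ≠ j2 → j' ≠ j3 → ∀ v, v ∈ g1 → v ∉ c j')
    (hav2 : ∀ j' ∈ I, j' ≠ j1 → j' ≠ j2 → j' ≠ j3 → ∀ v, v ∈ g2 → v ∉ c j')
    (hav3 : ∀ j' ∈ I, j' ≠ j1 → j' ≠ j2 → j' ≠ j3 → ∀ v, v ∈ g3 → v ∉ c j')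
    (hav4 : ∀ j' ∈ I, j' ≠ j1 → j' ≠ j2 → j' ≠ j3 → ∀ v, v ∈ g4 → v ∉ c j') : False := by
  classical
  refine C.aug {j1, j2, j3} {i1, i2, i3, i4} (by intro x hx; simp only [Finset.mem_insert, Finset.mem_singleton] at hx; rcases hx with rfl|rfl|rfl <;> assumption)
    (fun k => if k = i1 then g1 else if k = i2 then g2 else if k = i3 then g3 else g4) ?_ ?_ ?_ ?_ ?_
  · intro i hi; simp only [Finset.mem_insert, Finset.mem_singleton] at hi
    rcases hi with rfl|rfl|rfl|rfl <;> assumption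
  · intro i hi; simp only [Finset.mem_insert, Finset.mem_singleton] at hi
    rcases hi with rfl|rfl|rfl|rfl
    · simp only [if_pos rfl]; exact hg1
    · simp only [if_neg (Ne.symm h12), if_pos rfl]; exact hg2
    · simp only [if_neg (Ne.symm h13), if_neg (Ne.symm h23), if_pos rfl]; exact hg3
    · simp only [if_neg (Ne.symm h14), if_neg (Ne.symm h24), if_neg (Ne.symm h34)]; exact hg4
  · intro i hi i' hi' hne v hv
    simp only [Finset.mem_insert, Finset.mem_singleton] at hi hi'
    rcases hi with rfl|rfl|rfl|rfl <;> rcases hi' with rfl|rfl|rfl|rfl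
    · exact absurd rfl hne
    · simp only [if_pos rfl] at hv
      simp only [if_neg (Ne.symm h12), if_pos rfl]
      exact hd12 v hv
    · simp only [if_pos rfl] at hv
      simp only [if_neg (Ne.symm h13), if_neg (Ne.symm h23), if_pos rfl]
      exact hd13 v hv
    · simp only [if_pos rfl] at hv
      simp only [if_neg (Ne.symm h14), if_neg (Ne.symm h24), if_neg (Ne.symm h34)]
      exact hd14 v hv
    · simp only [if_neg (Ne.symm h12), if_pos rfl] at hv
      simp only [if_pos rfl]
      intro h; exact hd12 v h hv
    · exact absurd rfl hne
    · simp only [if_neg (Ne.symm h12), if_pos rfl] at hv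
      simp only [if_neg (Ne.symm h13), if_neg (Ne.symm h23), if_pos rfl]
      exact hd23 v hv
    · simp only [if_neg (Ne.symm h12), if_pos rfl] at hv
      simp only [if_neg (Ne.symm h14), if_neg (Ne.symm h24), if_neg (Ne.symm h34)]
      exact hd24 v hv
    · simp only [if_neg (Ne.symm h13), if_neg (Ne.symm h23), if_pos rfl] at hv
      simp only [if_pos rfl]
      intro h; exact hd13 v h hv
    · simp only [if_neg (Ne.symm h13), if_neg (Ne.symm h23), if_pos rfl] at hv
      simp only [if_neg (Ne.symm h12), if_pos rfl]
      intro h; exact hd23 v h hv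
    · exact absurd rfl hne
    · simp only [if_neg (Ne.symm h13), if_neg (Ne.symm h23), if_pos rfl] at hv
      simp only [if_neg (Ne.symm h14), if_neg (Ne.symm h24), if_neg (Ne.symm h34)]
      exact hd34 v hv
    · simp only [if_neg (Ne.symm h14), if_neg (Ne.symm h24), if_neg (Ne.symm h34)] at hv
      simp only [if_pos rfl]
      intro h; exact hd14 v h hv
    · simp only [if_neg (Ne.symm h14), if_neg (Ne.symm h24), if_neg (Ne.symm h34)] at hv
      simp only [if_neg (Ne.symm h12), if_pos rfl]
      intro h; exact hd24 v h hv
    · simp only [if_neg (Ne.symm h14), if_neg (Ne.symm h24), if_neg (Ne.symm h34)] at hv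
      simp only [if_neg (Ne.symm h13), if_neg (Ne.symm h23), if_pos rfl]
      intro h; exact hd34 v h hv
    · exact absurd rfl hne
  · intro i hi j' hj' hjT v hv
    simp only [Finset.mem_insert, Finset.mem_singleton, not_or] at hjT
    simp only [Finset.mem_insert, Finset.mem_singleton] at hi
    rcases hi with rfl|rfl|rfl|rfl
    · simp only [if_pos rfl] at hv
      obtain ⟨ht0, ht1, ht2⟩ := hjT
      exact hav1 j' hj' ht0 ht1 ht2 v hv
    · simp only [if_neg (Ne.symm h12), if_pos rfl] at hv
      obtain ⟨ht0, ht1, ht2⟩ := hjT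
      exact hav2 j' hj' ht0 ht1 ht2 v hv
    · simp only [if_neg (Ne.symm h13), if_neg (Ne.symm h23), if_pos rfl] at hv
      obtain ⟨ht0, ht1, ht2⟩ := hjT
      exact hav3 j' hj' ht0 ht1 ht2 v hv
    · simp only [if_neg (Ne.symm h14), if_neg (Ne.symm h24), if_neg (Ne.symm h34)] at hv
      obtain ⟨ht0, ht1, ht2⟩ := hjT
      exact hav4 j' hj' ht0 ht1 ht2 v hv
  · have hP : ({i1, i2, i3, i4} : Finset (Fin n)).card = 4 := by
      rw [Finset.card_insert_of_notMem (by simp [h12, h13, h14]), Finset.card_insert_of_notMem (by simp [h23, h24]), Finset.card_insert_of_notMem (by simp [h34]), Finset.card_singleton]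
    have hT0 := Finset.card_insert_le j1 ({j2, j3} : Finset (Fin n))
    have hT1 := Finset.card_insert_le j2 ({j3} : Finset (Fin n))
    have hTs : ({j3} : Finset (Fin n)).card = 1 := Finset.card_singleton _
    omega


/-- Structure of a half-wasteful pair: `c j_e = s(a,a2)`, `c j_f = s(p,p2)`, with
`s(a,s), s(p,w), s(a2,p2) ∈ F i`, `s, w` free. -/
theorem pairStruct {i : Fin n} (hi : i ∉ I) {j_e j_f : Fin n} (hje : j_e ∈ I) (hjf : j_f ∈ I)
    (hne : j_e ≠ j_f) (hp : HalfWastefulPair (I.image c) (F i) (c j_e) (c j_f)) :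
    ∃ a a2 p p2 s w : V,
      c j_e = s(a, a2) ∧ c j_f = s(p, p2) ∧
      s(a, s) ∈ F i ∧ MeetsOnly (I.image c) s(a, s) (c j_e) ∧ (∀ j' ∈ I, s ∉ c j') ∧
      s(p, w) ∈ F i ∧ MeetsOnly (I.image c) s(p, w) (c j_f) ∧ (∀ j' ∈ I, w ∉ c j') ∧
      s(a2, p2) ∈ F i := by
  obtain ⟨ge, hgeA, gf, hgfA, gef, hgefA, hoe, hof, me, mf⟩ := hp
  obtain ⟨a, s, rfl, ha, -, hs⟩ := C.anatomy hi hgeA hje hoe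
  obtain ⟨p, w, rfl, hpf, -, hw⟩ := C.anatomy hi hgfA hjf hof
  obtain ⟨x, hxgef, hxe⟩ := me
  obtain ⟨y, hygef, hyf⟩ := mf
  have hef : c j_e ≠ c j_f := fun h => hne (C.cinj hje hjf h)
  have hdisjef : ∀ v, v ∈ c j_e → v ∉ c j_f := C.hdisj j_e hje j_f hjf hne
  have hxy : x ≠ y := fun h => hdisjef x hxe (h ▸ hyf)
  have hgef_eq : gef = s(x, y) := by
    rw [← Sym2.other_spec hxgef]
    have hyo : y ∈ s(x, Sym2.Mem.other hxgef) := by rw [Sym2.other_spec hxgef]; exact hygef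
    rcases Sym2.mem_iff.mp hyo with h | h
    · exact absurd h.symm hxy
    · rw [h]
  -- gef ≠ ge and gef ≠ gf
  have hgef_ne_ge : gef ≠ s(a, s) := by
    intro h
    have : Meets s(a, s) (c j_f) := ⟨y, by rw [← h, hgef_eq]; exact Sym2.mem_mk_right x y, hyf⟩
    exact hoe.2 (c j_f) (Finset.mem_image_of_mem c hjf) hef.symm this
  have hgef_ne_gf : gef ≠ s(p, w) := by
    intro h
    have : Meets s(p, w) (c j_e) := ⟨x, by rw [← h, hgef_eq]; exact Sym2.mem_mk_left x y, hxe⟩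
    exact hof.2 (c j_e) (Finset.mem_image_of_mem c hje) hef this
  have hd1 : ∀ v, v ∈ gef → v ∉ s(a, s) := C.hmatch i gef hgefA _ hgeA hgef_ne_ge
  have hd2 : ∀ v, v ∈ gef → v ∉ s(p, w) := C.hmatch i gef hgefA _ hgfA hgef_ne_gf
  -- x is the other vertex of e
  set a2 := Sym2.Mem.other ha with ha2
  have heq : c j_e = s(a, a2) := (Sym2.other_spec ha).symm
  set p2 := Sym2.Mem.other hpf with hp2
  have hfq : c j_f = s(p, p2) := (Sym2.other_spec hpf).symm
  have hxa2 : x = a2 := by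
    have hxa : x ≠ a := by
      intro h
      exact hd1 x hxgef (by rw [h]; exact Sym2.mem_mk_left a s)
    have := hxe
    rw [heq] at this
    rcases Sym2.mem_iff.mp this with h | h
    · exact absurd h hxa
    · exact h
  have hyp2 : y = p2 := by
    have hyp : y ≠ p := by
      intro h
      exact hd2 y hygef (by rw [h]; exact Sym2.mem_mk_left p w)
    have := hyf
    rw [hfq] at this
    rcases Sym2.mem_iff.mp this with h | h
    · exact absurd h hyp
    · exact h
  refine ⟨a, a2, p, p2, s, w, heq, hfq, hgeA, hoe, hs, hgfA, hof, hw, ?_⟩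
  rw [← hxa2, ← hyp2, ← hgef_eq]
  exact hgefA

/-- From `hwDeg ≥ 5` and an anchor only-`e` edge `s(a,s) ∈ F iG`, pick an only-`e` edge
`s(a,z) ∈ F i` with `i` avoiding `excl ∪ {i_av}` and `z` free with `z ≠ v_av`. -/
theorem supply_pick {j_e : Fin n} (hje : j_e ∈ I) {iG : Fin n} (hiG : iG ∉ I)
    {a s : V} (hαF : s(a, s) ∈ F iG) (hαo : MeetsOnly (I.image c) s(a, s) (c j_e))
    (ha : a ∈ c j_e) (hs : ∀ j' ∈ I, s ∉ c j')
    (excl : Finset (Fin n)) (hGex : iG ∈ excl) (hexcl : excl.card ≤ 2)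
    (i_av : Fin n) (v_av : V)
    (h5 : 5 ≤ hwDeg F I (I.image c) (c j_e)) :
    ∃ i z, i ∉ I ∧ i ∉ excl ∧ i ≠ i_av ∧ (∀ j' ∈ I, z ∉ c j') ∧ z ≠ v_av ∧
      s(a, z) ∈ F i ∧ MeetsOnly (I.image c) s(a, z) (c j_e) := by
  classical
  set K : Finset (Fin n) :=
    Finset.univ.filter (fun i => i ∉ I ∧ HalfWasteful (I.image c) (F i) (c j_e)) with hK
  have hKdeg : hwDeg F I (I.image c) (c j_e) = K.card := by
    rw [hwDeg, ← Set.ncard_coe_finset]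
    congr 1
    ext i
    simp [hK]
  have hcard3 : 3 ≤ (K \ excl).card := by
    have h1 := Finset.le_card_sdiff excl K
    omega
  obtain ⟨t, hts, htc⟩ := Finset.exists_subset_card_eq hcard3
  obtain ⟨i1, i2, i3, h12, h13, h23, rfl⟩ := Finset.card_eq_three.mp htc
  have hget : ∀ i ∈ (K \ excl), i ∉ I ∧ i ∉ excl ∧
      ∃ x z, s(x, z) ∈ F i ∧ MeetsOnly (I.image c) s(x, z) (c j_e) ∧ x ∈ c j_e ∧
        (∀ j' ∈ I, z ∉ c j') := by
    intro i hi
    have hiK := Finset.mem_sdiff.mp hi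
    have hmem := Finset.mem_filter.mp hiK.1
    obtain ⟨f, hfR, hfe, ge, hgeA, gf, hgfA, gef, hgefA, hoe, hof, -, -⟩ := hmem.2.2
    obtain ⟨x, z, rfl, hx, -, hz⟩ := C.anatomy hmem.2.1 hgeA hje hoe
    exact ⟨hmem.2.1, hiK.2, x, z, hgeA, hoe, hx, hz⟩
  obtain ⟨hi1I, hi1ex, x1, z1, hF1, ho1, hx1, hz1⟩ :=
    hget i1 (hts (by simp))
  obtain ⟨hi2I, hi2ex, x2, z2, hF2, ho2, hx2, hz2⟩ :=
    hget i2 (hts (by simp))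
  obtain ⟨hi3I, hi3ex, x3, z3, hF3, ho3, hx3, hz3⟩ :=
    hget i3 (hts (by simp))
  have hne1G : i1 ≠ iG := fun h => hi1ex (h ▸ hGex)
  have hne2G : i2 ≠ iG := fun h => hi2ex (h ▸ hGex)
  have hne3G : i3 ≠ iG := fun h => hi3ex (h ▸ hGex)
  -- the other vertex of e
  set a2 := Sym2.Mem.other ha with ha2def
  have heq : c j_e = s(a, a2) := (Sym2.other_spec ha).symm
  have haa2 : a ≠ a2 := by
    intro h
    exact C.nondiag (C.hc j_e hje) (by rw [heq, Sym2.mk_isDiag_iff]; exact h)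
  have hsa : s ≠ a := fun h => hs j_e hje (h ▸ ha)
  have hsa2 : s ≠ a2 := fun h => hs j_e hje (by rw [h, heq]; exact Sym2.mem_mk_right a a2)
  -- edges are pairwise distinct (different matchings)
  have hdistinct : ∀ {i i' : Fin n} {g g' : Sym2 V}, i ≠ i' → g ∈ F i → g' ∈ F i' → g ≠ g' := by
    intro i i' g g' hii hg hg' hgg
    exact Finset.disjoint_left.mp (C.hdisjF i i' hii) hg (hgg ▸ hg')
  -- dichotomy: each edge is at `a`, or is s(a2, s)
  have dich : ∀ {i : Fin n} {x z : V}, i ∉ I → i ≠ iG → s(x, z) ∈ F i →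
      MeetsOnly (I.image c) s(x, z) (c j_e) → x ∈ c j_e → (∀ j' ∈ I, z ∉ c j') →
      (x = a ∨ (x = a2 ∧ z = s)) := by
    intro i x z hiI hiiG hF ho hx hz
    have hm : Meets s(x, z) s(a, s) := C.only_meets hje hiI hiG hiiG hF hαF ho hαo
    rcases Sym2.mem_iff.mp (heq ▸ hx) with h | h
    · exact Or.inl h
    · subst h
      right
      refine ⟨rfl, ?_⟩
      obtain ⟨v, hv1, hv2⟩ := hm
      rcases Sym2.mem_iff.mp hv1 with rfl | rfl <;> rcases Sym2.mem_iff.mp hv2 with h2 | h2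
      · exact absurd h2 (Ne.symm haa2)
      · exact absurd h2 (Ne.symm hsa2)
      · exact absurd h2 (fun hh => hz j_e hje (hh ▸ ha))
      · exact h2
  have D1 := dich hi1I hne1G hF1 ho1 hx1 hz1
  have D2 := dich hi2I hne2G hF2 ho2 hx2 hz2
  have D3 := dich hi3I hne3G hF3 ho3 hx3 hz3
  -- if two edges are both at `a2` with end `s` they coincide; if one is s(a2,s) and
  -- another is at `a`, the one at `a` has end `s` too (they must meet)
  have cross : ∀ {i i' : Fin n} {z z' : V}, i ∉ I → i' ∉ I → i ≠ i' →
      s(a2, z) ∈ F i → z = s → s(a, z') ∈ F i' →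
      MeetsOnly (I.image c) s(a2, z) (c j_e) → MeetsOnly (I.image c) s(a, z') (c j_e) →
      (∀ j' ∈ I, z' ∉ c j') → z' = s := by
    intro i i' z z' hiI hi'I hii hF hzs hF' ho ho' hz'
    rw [hzs] at hF ho
    have hm : Meets s(a, z') s(a2, s) := C.only_meets hje hi'I hiI (Ne.symm hii) hF' hF ho' ho
    obtain ⟨v, hv1, hv2⟩ := hm
    rcases Sym2.mem_iff.mp hv1 with rfl | rfl <;> rcases Sym2.mem_iff.mp hv2 with h2 | h2
    · exact absurd h2 haa2
    · exact absurd h2 (Ne.symm hsa)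
    · exact absurd h2 (fun hh => hz' j_e hje (by rw [hh, heq]; exact Sym2.mem_mk_right a a2))
    · exact h2
  -- conclude: all three are at `a`
  have hall : x1 = a ∧ x2 = a ∧ x3 = a := by
    rcases D1 with h1 | ⟨hx1a, hz1s⟩
    · rcases D2 with h2 | ⟨hx2a, hz2s⟩
      · rcases D3 with h3 | ⟨hx3a, hz3s⟩
        · exact ⟨h1, h2, h3⟩
        · rw [hx3a, hz3s] at hF3 ho3
          rw [h1] at hF1 ho1
          rw [h2] at hF2 ho2
          have e1 : z1 = s := cross hi3I hi1I (Ne.symm h13) hF3 rfl hF1 ho3 ho1 hz1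
          have e2 : z2 = s := cross hi3I hi2I (Ne.symm h23) hF3 rfl hF2 ho3 ho2 hz2
          exact absurd (by rw [e1, e2]) (hdistinct h12 hF1 hF2)
      · rw [hx2a, hz2s] at hF2 ho2
        rw [h1] at hF1 ho1
        rcases D3 with h3 | ⟨hx3a, hz3s⟩
        · rw [h3] at hF3 ho3
          have e1 : z1 = s := cross hi2I hi1I (Ne.symm h12) hF2 rfl hF1 ho2 ho1 hz1
          have e3 : z3 = s := cross hi2I hi3I h23 hF2 rfl hF3 ho2 ho3 hz3
          exact absurd (by rw [e1, e3]) (hdistinct h13 hF1 hF3)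
        · rw [hx3a, hz3s] at hF3
          exact absurd rfl (hdistinct h23 hF2 hF3)
    · rw [hx1a, hz1s] at hF1 ho1
      rcases D2 with h2 | ⟨hx2a, hz2s⟩
      · rw [h2] at hF2 ho2
        rcases D3 with h3 | ⟨hx3a, hz3s⟩
        · rw [h3] at hF3 ho3
          have e2 : z2 = s := cross hi1I hi2I h12 hF1 rfl hF2 ho1 ho2 hz2
          have e3 : z3 = s := cross hi1I hi3I h13 hF1 rfl hF3 ho1 ho3 hz3
          exact absurd (by rw [e2, e3]) (hdistinct h23 hF2 hF3)
        · rw [hx3a, hz3s] at hF3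
          exact absurd rfl (hdistinct h13 hF1 hF3)
      · rw [hx2a, hz2s] at hF2
        exact absurd rfl (hdistinct h12 hF1 hF2)
  obtain ⟨hax1, hax2, hax3⟩ := hall
  rw [hax1] at hF1 ho1
  rw [hax2] at hF2 ho2
  rw [hax3] at hF3 ho3
  -- the free ends are pairwise distinct
  have hz12 : z1 ≠ z2 := fun h => hdistinct h12 hF1 hF2 (by rw [h])
  have hz13 : z1 ≠ z3 := fun h => hdistinct h13 hF1 hF3 (by rw [h])
  have hz23 : z2 ≠ z3 := fun h => hdistinct h23 hF2 hF3 (by rw [h])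
  -- now pick a good candidate
  by_cases hc1 : i1 ≠ i_av ∧ z1 ≠ v_av
  · exact ⟨i1, z1, hi1I, hi1ex, hc1.1, hz1, hc1.2, hF1, ho1⟩
  · by_cases hc2 : i2 ≠ i_av ∧ z2 ≠ v_av
    · exact ⟨i2, z2, hi2I, hi2ex, hc2.1, hz2, hc2.2, hF2, ho2⟩
    · -- both 1 and 2 are bad; show 3 is good
      refine ⟨i3, z3, hi3I, hi3ex, ?_, hz3, ?_, hF3, ho3⟩
      · rcases not_and_or.mp hc1 with h | h
        · intro h3; rw [not_not] at h; exact h13 (by rw [h, ← h3])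
        · rcases not_and_or.mp hc2 with h' | h'
          · intro h3; rw [not_not] at h'; exact h23 (by rw [h', ← h3])
          · rw [not_not] at h h'; exact absurd (h.trans h'.symm) hz12
      · rcases not_and_or.mp hc1 with h | h
        · rcases not_and_or.mp hc2 with h' | h'
          · rw [not_not] at h h'; exact absurd (h.trans h'.symm) h12
          · rw [not_not] at h'; intro h3; exact hz23 (by rw [h', ← h3])
        · rw [not_not] at h; intro h3; exact hz13 (by rw [h, ← h3])

theorem vert_ne {j j' : Fin n} (hj : j ∈ I) (hj' : j' ∈ I) (hne : j ≠ j') {u v : V}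
    (hu : u ∈ c j) (hv : v ∈ c j') : u ≠ v :=
  fun h => C.hdisj j hj j' hj' hne u hu (h ▸ hv)

theorem free_ne {j : Fin n} (hj : j ∈ I) {u z : V} (hu : u ∈ c j)
    (hz : ∀ j' ∈ I, z ∉ c j') : u ≠ z :=
  fun h => hz j hj (h ▸ hu)

theorem nondiag_ne {j : Fin n} (hj : j ∈ I) {u v : V} (h : c j = s(u, v)) : u ≠ v :=
  fun huv => C.nondiag (C.hc j hj) (by rw [h, Sym2.mk_isDiag_iff]; exact huv)

theorem Ravoid {j : Fin n} (hj : j ∈ I) {v : V} (hv : v ∈ c j) :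
    ∀ j' ∈ I, j' ≠ j → v ∉ c j' :=
  fun j' hj' hne => C.hdisj j hj j' hj' (fun h => hne h.symm) v hv

/-- Key augmentation: a pair structure on `(e, f)` through `iG` plus an only-`f` edge of
`iH` at the same `f`-vertex as `iG`'s only-`f` edge contradicts maximality when
`deg e ≥ 5`. -/
theorem claimC_aux {j_e j_f : Fin n} (hje : j_e ∈ I) (hjf : j_f ∈ I) (hnejef : j_e ≠ j_f)
    {iG iH : Fin n} (hiG : iG ∉ I) (hiH : iH ∉ I) (hGH : iG ≠ iH)
    {a a2 p p2 s wH : V}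
    (he : c j_e = s(a, a2)) (hf : c j_f = s(p, p2))
    (hαF : s(a, s) ∈ F iG) (hαo : MeetsOnly (I.image c) s(a, s) (c j_e))
    (hsfree : ∀ j' ∈ I, s ∉ c j')
    (hγ : s(a2, p2) ∈ F iG)
    (hφH : s(p, wH) ∈ F iH)
    (hwH : ∀ j' ∈ I, wH ∉ c j')
    (h5 : 5 ≤ hwDeg F I (I.image c) (c j_e)) : False := by
  classical
  have ha : a ∈ c j_e := by rw [he]; exact Sym2.mem_mk_left a a2
  have ha2 : a2 ∈ c j_e := by rw [he]; exact Sym2.mem_mk_right a a2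
  have hp : p ∈ c j_f := by rw [hf]; exact Sym2.mem_mk_left p p2
  have hp2 : p2 ∈ c j_f := by rw [hf]; exact Sym2.mem_mk_right p p2
  obtain ⟨iM, z, hiMI, hiMex, -, hzfree, hzwH, hMF, hMo⟩ :=
    C.supply_pick hje hiG hαF hαo ha hsfree {iG, iH} (by simp) (by
      apply (Finset.card_insert_le _ _).trans; simp) iG wH h5
  have hMG : iG ≠ iM := fun h => hiMex (by simp [← h])
  have hMH : iH ≠ iM := fun h => hiMex (by simp [← h])
  refine C.aug3 hje hjf hiG hiH hiMI hGH hMG hMH hγ hφH hMF ?_ ?_ ?_ ?_ ?_ ?_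
  · -- s(a2,p2) vs s(p,wH)
    intro v hv hv'
    rcases Sym2.mem_iff.mp hv with rfl | rfl <;> rcases Sym2.mem_iff.mp hv' with h | h
    · exact C.vert_ne hje hjf hnejef ha2 hp h
    · exact C.free_ne hje ha2 hwH h
    · exact C.nondiag_ne hjf hf (by rw [h])
    · exact C.free_ne hjf hp2 hwH h
  · -- s(a2,p2) vs s(a,z)
    intro v hv hv'
    rcases Sym2.mem_iff.mp hv with rfl | rfl <;> rcases Sym2.mem_iff.mp hv' with h | h
    · exact C.nondiag_ne hje he (by rw [h])
    · exact C.free_ne hje ha2 hzfree h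
    · exact C.vert_ne hjf hje hnejef.symm hp2 ha h
    · exact C.free_ne hjf hp2 hzfree h
  · -- s(p,wH) vs s(a,z)
    intro v hv hv'
    rcases Sym2.mem_iff.mp hv with rfl | rfl <;> rcases Sym2.mem_iff.mp hv' with h | h
    · exact C.vert_ne hjf hje hnejef.symm hp ha h
    · exact C.free_ne hjf hp hzfree h
    · exact (C.free_ne hje ha hwH h.symm).elim
    · exact hzwH h.symm
  · intro j' hj' h1 h2 v hv
    rcases Sym2.mem_iff.mp hv with rfl | rfl
    · exact C.Ravoid hje ha2 j' hj' h1
    · exact C.Ravoid hjf hp2 j' hj' h2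
  · intro j' hj' h1 h2 v hv
    rcases Sym2.mem_iff.mp hv with rfl | rfl
    · exact C.Ravoid hjf hp j' hj' h2
    · exact hwH j' hj'
  · intro j' hj' h1 h2 v hv
    rcases Sym2.mem_iff.mp hv with rfl | rfl
    · exact C.Ravoid hje ha j' hj' h1
    · exact hzfree j' hj'

/-- Claim C: if `deg e ≥ 5` and `{e, f}` is a half-wasteful pair for some unrepresented
matching, then `deg f ≤ 2`. -/
theorem claimC {j_e j_f : Fin n} (hje : j_e ∈ I) (hjf : j_f ∈ I) (hnejef : j_e ≠ j_f)
    {iG : Fin n} (hiG : iG ∉ I)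
    (hp : HalfWastefulPair (I.image c) (F iG) (c j_e) (c j_f))
    (h5 : 5 ≤ hwDeg F I (I.image c) (c j_e)) :
    hwDeg F I (I.image c) (c j_f) ≤ 2 := by
  classical
  by_contra hcon
  push_neg at hcon
  obtain ⟨a, a2, p, p2, s, w, he, hf, hαF, hαo, hsf, hφF, hφo, hwf, hγ⟩ :=
    C.pairStruct hiG hje hjf hnejef hp
  have hdistinct : ∀ {i i' : Fin n} {g g' : Sym2 V}, i ≠ i' → g ∈ F i → g' ∈ F i' →
      g ≠ g' := by
    intro i i' g g' hii hg hg' hgg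
    exact Finset.disjoint_left.mp (C.hdisjF i i' hii) hg (hgg ▸ hg')
  have hp' : p ∈ c j_f := by rw [hf]; exact Sym2.mem_mk_left p p2
  have hp2' : p2 ∈ c j_f := by rw [hf]; exact Sym2.mem_mk_right p p2
  set K : Finset (Fin n) :=
    Finset.univ.filter (fun i => i ∉ I ∧ HalfWasteful (I.image c) (F i) (c j_f)) with hK
  have hKdeg : hwDeg F I (I.image c) (c j_f) = K.card := by
    rw [hwDeg, ← Set.ncard_coe_finset]
    congr 1
    ext i
    simp [hK]
  have hcard2 : 2 ≤ (K \ {iG}).card := by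
    have h1 := Finset.le_card_sdiff {iG} K
    have h2 : ({iG} : Finset (Fin n)).card = 1 := Finset.card_singleton _
    omega
  obtain ⟨t, hts, htc⟩ := Finset.exists_subset_card_eq hcard2
  obtain ⟨iH1, iH2, hH12, rfl⟩ := Finset.card_eq_two.mp htc
  have hget : ∀ i ∈ (K \ {iG}), i ∉ I ∧ i ≠ iG ∧
      ∃ y u, s(y, u) ∈ F i ∧ MeetsOnly (I.image c) s(y, u) (c j_f) ∧ y ∈ c j_f ∧
        (∀ j' ∈ I, u ∉ c j') := by
    intro i hi
    have hiK := Finset.mem_sdiff.mp hi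
    have hmem := Finset.mem_filter.mp hiK.1
    obtain ⟨f', hf'R, hf'e, ge, hgeA, gf, hgfA, gef, hgefA, hoe, hof, -, -⟩ := hmem.2.2
    obtain ⟨y, u, rfl, hy, -, hu⟩ := C.anatomy hmem.2.1 hgeA hjf hoe
    exact ⟨hmem.2.1, by simpa using hiK.2, y, u, hgeA, hoe, hy, hu⟩
  obtain ⟨hi1I, hi1G, y1, u1, hF1, ho1, hy1, hu1⟩ := hget iH1 (hts (by simp))
  obtain ⟨hi2I, hi2G, y2, u2, hF2, ho2, hy2, hu2⟩ := hget iH2 (hts (by simp))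
  -- dichotomy for an only-f edge vs φ = s(p,w)
  have dich : ∀ {i : Fin n} {y u : V}, i ∉ I → i ≠ iG → s(y, u) ∈ F i →
      MeetsOnly (I.image c) s(y, u) (c j_f) → y ∈ c j_f → (∀ j' ∈ I, u ∉ c j') →
      (y = p ∨ (y = p2 ∧ u = w)) := by
    intro i y u hiI hiiG hF ho hy hu
    have hm : Meets s(y, u) s(p, w) := C.only_meets hjf hiI hiG hiiG hF hφF ho hφo
    rcases Sym2.mem_iff.mp (hf ▸ hy) with h | h
    · exact Or.inl h
    · subst h
      right
      refine ⟨rfl, ?_⟩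
      obtain ⟨v, hv1, hv2⟩ := hm
      rcases Sym2.mem_iff.mp hv1 with rfl | rfl <;> rcases Sym2.mem_iff.mp hv2 with h2 | h2
      · exact absurd h2 (C.nondiag_ne hjf hf).symm
      · exact absurd h2 (C.free_ne hjf hp2' hwf)
      · exact (hu j_f hjf (by rw [h2]; exact hp')).elim
      · exact h2
  have D1 := dich hi1I hi1G hF1 ho1 hy1 hu1
  have D2 := dich hi2I hi2G hF2 ho2 hy2 hu2
  rcases D1 with h1 | ⟨hy1p, hu1w⟩
  · rw [h1] at hF1
    exact C.claimC_aux hje hjf hnejef hiG hi1I (Ne.symm hi1G) he hf hαF hαo hsf hγ hF1 hu1 h5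
  · rcases D2 with h2 | ⟨hy2p, hu2w⟩
    · rw [h2] at hF2
      exact C.claimC_aux hje hjf hnejef hiG hi2I (Ne.symm hi2G) he hf hαF hαo hsf hγ hF2 hu2 h5
    · rw [hy1p, hu1w] at hF1
      rw [hy2p, hu2w] at hF2
      exact absurd rfl (hdistinct hH12 hF1 hF2)

/-- The same unrepresented matching cannot witness half-wasteful pairs `{e, f}` and
`{e', f}` with `e ≠ e'`. -/
theorem sameG {i : Fin n} (hi : i ∉ I) {j_e j_e' j_f : Fin n}
    (hje : j_e ∈ I) (hje' : j_e' ∈ I) (hjf : j_f ∈ I)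
    (hee' : j_e ≠ j_e') (hef : j_e ≠ j_f) (he'f : j_e' ≠ j_f)
    (hp : HalfWastefulPair (I.image c) (F i) (c j_e) (c j_f))
    (hp' : HalfWastefulPair (I.image c) (F i) (c j_e') (c j_f)) : False := by
  obtain ⟨a, a2, p, p2, s, w, he, hf, hαF, hαo, hsf, hφF, hφo, hwf, hγ⟩ :=
    C.pairStruct hi hje hjf hef hp
  obtain ⟨b, b2, q, q2, s', w', he', hf', hα'F, hα'o, hs'f, hφ'F, hφ'o, hw'f, hγ'⟩ :=
    C.pairStruct hi hje' hjf he'f hp'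
  have ha2 : a2 ∈ c j_e := by rw [he]; exact Sym2.mem_mk_right a a2
  have hb2 : b2 ∈ c j_e' := by rw [he']; exact Sym2.mem_mk_right b b2
  have hq2f : q2 ∈ c j_f := by rw [hf']; exact Sym2.mem_mk_right q q2
  have hpf : p ∈ c j_f := by rw [hf]; exact Sym2.mem_mk_left p p2
  have hp2f : p2 ∈ c j_f := by rw [hf]; exact Sym2.mem_mk_right p p2
  -- γ' = s(b2,q2) is distinct from γ = s(a2,p2) and φ = s(p,w)
  have hne1 : s(b2, q2) ≠ s(a2, p2) := by
    intro h
    have : b2 ∈ s(a2, p2) := h ▸ Sym2.mem_mk_left b2 q2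
    rcases Sym2.mem_iff.mp this with h2 | h2
    · exact C.vert_ne hje' hje hee'.symm hb2 ha2 h2
    · exact C.vert_ne hje' hjf he'f hb2 hp2f h2
  have hne2 : s(b2, q2) ≠ s(p, w) := by
    intro h
    have : b2 ∈ s(p, w) := h ▸ Sym2.mem_mk_left b2 q2
    rcases Sym2.mem_iff.mp this with h2 | h2
    · exact C.vert_ne hje' hjf he'f hb2 hpf h2
    · exact C.free_ne hje' hb2 hwf h2
  have hd1 := C.hmatch i _ hγ' _ hγ hne1
  have hd2 := C.hmatch i _ hγ' _ hφF hne2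
  have hq2γ := hd1 q2 (Sym2.mem_mk_right b2 q2)
  have hq2φ := hd2 q2 (Sym2.mem_mk_right b2 q2)
  rcases Sym2.mem_iff.mp (hf ▸ hq2f) with h | h
  · exact hq2φ (by rw [h]; exact Sym2.mem_mk_left p w)
  · exact hq2γ (by rw [h]; exact Sym2.mem_mk_right a2 p2)

/-- Two distinct unrepresented matchings cannot witness half-wasteful pairs `{e, f}` and
`{e', f}` with `e ≠ e'` both of degree ≥ 5. -/
theorem crossG {iG iG' : Fin n} (hiG : iG ∉ I) (hiG' : iG' ∉ I) (hGG' : iG ≠ iG')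
    {j_e j_e' j_f : Fin n} (hje : j_e ∈ I) (hje' : j_e' ∈ I) (hjf : j_f ∈ I)
    (hee' : j_e ≠ j_e') (hef : j_e ≠ j_f) (he'f : j_e' ≠ j_f)
    (hp : HalfWastefulPair (I.image c) (F iG) (c j_e) (c j_f))
    (hp' : HalfWastefulPair (I.image c) (F iG') (c j_e') (c j_f))
    (h5 : 5 ≤ hwDeg F I (I.image c) (c j_e))
    (h5' : 5 ≤ hwDeg F I (I.image c) (c j_e')) : False := by
  classical
  obtain ⟨a, a2, p, p2, s, w, he, hf, hαF, hαo, hsf, hφF, hφo, hwf, hγ⟩ :=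
    C.pairStruct hiG hje hjf hef hp
  obtain ⟨b, b2, q, q2, s', w', he', hf', hα'F, hα'o, hs'f, hφ'F, hφ'o, hw'f, hγ'⟩ :=
    C.pairStruct hiG' hje' hjf he'f hp'
  have ha : a ∈ c j_e := by rw [he]; exact Sym2.mem_mk_left a a2
  have ha2 : a2 ∈ c j_e := by rw [he]; exact Sym2.mem_mk_right a a2
  have hb : b ∈ c j_e' := by rw [he']; exact Sym2.mem_mk_left b b2
  have hb2 : b2 ∈ c j_e' := by rw [he']; exact Sym2.mem_mk_right b b2
  have hpf : p ∈ c j_f := by rw [hf]; exact Sym2.mem_mk_left p p2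
  have hp2f : p2 ∈ c j_f := by rw [hf]; exact Sym2.mem_mk_right p p2
  have hqf : q ∈ c j_f := by rw [hf']; exact Sym2.mem_mk_left q q2
  have hq2f : q2 ∈ c j_f := by rw [hf']; exact Sym2.mem_mk_right q q2
  -- q = p or q = p2
  rcases Sym2.mem_iff.mp (hf ▸ hqf) with hqp | hqp2
  · -- q = p : claimC_aux applies with iH := iG'
    rw [hqp] at hφ'F
    exact C.claimC_aux hje hjf hef hiG hiG' hGG' he hf hαF hαo hsf hγ hφ'F hw'f h5
  · -- q = p2, so q2 = p
    have hq2p : q2 = p := by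
      rcases Sym2.mem_iff.mp (hf ▸ hq2f) with h | h
      · exact h
      · exact absurd (hqp2.trans h.symm) (C.nondiag_ne hjf hf')
    rw [hq2p] at hγ'
    -- pick fresh only-e and only-e' edges
    obtain ⟨iM, z, hiMI, hiMex, -, hzfree, -, hMF, hMo⟩ :=
      C.supply_pick hje hiG hαF hαo ha hsf {iG, iG'} (by simp) (by
        apply (Finset.card_insert_le _ _).trans; simp) iG a h5
    obtain ⟨iN, y, hiNI, hiNex, hiNM, hyfree, hyz, hNF, hNo⟩ :=
      C.supply_pick hje' hiG' hα'F hα'o hb hs'f {iG, iG'} (by simp) (by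
        apply (Finset.card_insert_le _ _).trans; simp) iM z h5'
    have hMG : iG ≠ iM := fun h => hiMex (by simp [← h])
    have hMG' : iG' ≠ iM := fun h => hiMex (by simp [← h])
    have hNG : iG ≠ iN := fun h => hiNex (by simp [← h])
    have hNG' : iG' ≠ iN := fun h => hiNex (by simp [← h])
    refine C.aug4 hje hje' hjf hiG hiG' hiMI hiNI hGG' hMG hNG hMG' hNG'
      (Ne.symm hiNM) hγ hγ' hMF hNF ?_ ?_ ?_ ?_ ?_ ?_ ?_ ?_ ?_ ?_
    · -- s(a2,p2) vs s(b2,p)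
      intro v hv hv'
      rcases Sym2.mem_iff.mp hv with rfl | rfl <;> rcases Sym2.mem_iff.mp hv' with h | h
      · exact C.vert_ne hje hje' hee' ha2 hb2 h
      · exact C.vert_ne hje hjf hef ha2 hpf h
      · exact C.vert_ne hjf hje' he'f.symm hp2f hb2 h
      · exact C.nondiag_ne hjf hf (by rw [h])
    · -- s(a2,p2) vs s(a,z)
      intro v hv hv'
      rcases Sym2.mem_iff.mp hv with rfl | rfl <;> rcases Sym2.mem_iff.mp hv' with h | h
      · exact C.nondiag_ne hje he (by rw [h])
      · exact C.free_ne hje ha2 hzfree h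
      · exact C.vert_ne hjf hje hef.symm hp2f ha h
      · exact C.free_ne hjf hp2f hzfree h
    · -- s(a2,p2) vs s(b,y)
      intro v hv hv'
      rcases Sym2.mem_iff.mp hv with rfl | rfl <;> rcases Sym2.mem_iff.mp hv' with h | h
      · exact C.vert_ne hje hje' hee' ha2 hb h
      · exact C.free_ne hje ha2 hyfree h
      · exact C.vert_ne hjf hje' he'f.symm hp2f hb h
      · exact C.free_ne hjf hp2f hyfree h
    · -- s(b2,p) vs s(a,z)
      intro v hv hv'
      rcases Sym2.mem_iff.mp hv with rfl | rfl <;> rcases Sym2.mem_iff.mp hv' with h | h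
      · exact C.vert_ne hje' hje hee'.symm hb2 ha h
      · exact C.free_ne hje' hb2 hzfree h
      · exact C.vert_ne hjf hje hef.symm hpf ha h
      · exact C.free_ne hjf hpf hzfree h
    · -- s(b2,p) vs s(b,y)
      intro v hv hv'
      rcases Sym2.mem_iff.mp hv with rfl | rfl <;> rcases Sym2.mem_iff.mp hv' with h | h
      · exact C.nondiag_ne hje' he' (by rw [h])
      · exact C.free_ne hje' hb2 hyfree h
      · exact C.vert_ne hjf hje' he'f.symm hpf hb h
      · exact C.free_ne hjf hpf hyfree h
    · -- s(a,z) vs s(b,y)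
      intro v hv hv'
      rcases Sym2.mem_iff.mp hv with rfl | rfl <;> rcases Sym2.mem_iff.mp hv' with h | h
      · exact C.vert_ne hje hje' hee' ha hb h
      · exact C.free_ne hje ha hyfree h
      · exact (C.free_ne hje' hb hzfree h.symm).elim
      · exact hyz h.symm
    · intro j' hj' h1 h2 h3 v hv
      rcases Sym2.mem_iff.mp hv with rfl | rfl
      · exact C.Ravoid hje ha2 j' hj' h1
      · exact C.Ravoid hjf hp2f j' hj' h3
    · intro j' hj' h1 h2 h3 v hv
      rcases Sym2.mem_iff.mp hv with rfl | rfl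
      · exact C.Ravoid hje' hb2 j' hj' h2
      · exact C.Ravoid hjf hpf j' hj' h3
    · intro j' hj' h1 h2 h3 v hv
      rcases Sym2.mem_iff.mp hv with rfl | rfl
      · exact C.Ravoid hje ha j' hj' h1
      · exact hzfree j' hj'
    · intro j' hj' h1 h2 h3 v hv
      rcases Sym2.mem_iff.mp hv with rfl | rfl
      · exact C.Ravoid hje' hb j' hj' h2
      · exact hyfree j' hj'

end Ctx


theorem HalfWastefulPair.symm {V : Type*} {R A : Finset (Sym2 V)} {e f : Sym2 V}
    (h : HalfWastefulPair R A e f) : HalfWastefulPair R A f e := by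
  obtain ⟨ge, h1, gf, h2, gef, h3, o1, o2, m1, m2⟩ := h
  exact ⟨gf, h2, ge, h1, gef, h3, o2, o1, m2, m1⟩

/-- The finset of unrepresented matchings for which `e` is half-wasteful. -/
noncomputable def Kfin {V : Type*} {n : ℕ} (F : Fin n → Finset (Sym2 V))
    (I : Finset (Fin n)) (R : Finset (Sym2 V)) (e : Sym2 V) : Finset (Fin n) :=
  @Finset.filter _ (fun i => i ∉ I ∧ HalfWasteful R (F i) e) (Classical.decPred _)
    Finset.univ

theorem Kfin_mem {V : Type*} {n : ℕ} {F : Fin n → Finset (Sym2 V)}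
    {I : Finset (Fin n)} {R : Finset (Sym2 V)} {e : Sym2 V} {i : Fin n} :
    i ∈ Kfin F I R e ↔ (i ∉ I ∧ HalfWasteful R (F i) e) := by
  simp [Kfin]

theorem hwDeg_eq_card {V : Type*} {n : ℕ} (F : Fin n → Finset (Sym2 V))
    (I : Finset (Fin n)) (R : Finset (Sym2 V)) (e : Sym2 V) :
    hwDeg F I R e = (Kfin F I R e).card := by
  rw [hwDeg, ← Set.ncard_coe_finset]
  congr 1
  ext i
  simp [Kfin]

/-- A choice of partner for a half-wasteful edge. -/
noncomputable def partner {V : Type*} {n : ℕ} (F : Fin n → Finset (Sym2 V))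
    (R : Finset (Sym2 V)) (i : Fin n) (e : Sym2 V) : Sym2 V :=
  @dite _ (HalfWasteful R (F i) e) (Classical.dec _) (fun h => h.choose) (fun _ => e)

theorem partner_spec {V : Type*} {n : ℕ} {F : Fin n → Finset (Sym2 V)}
    {R : Finset (Sym2 V)} {i : Fin n} {e : Sym2 V} (h : HalfWasteful R (F i) e) :
    partner F R i e ∈ R ∧ partner F R i e ≠ e ∧
      HalfWastefulPair R (F i) e (partner F R i e) := by
  unfold partner
  rw [dif_pos h]
  exact ⟨h.choose_spec.1, h.choose_spec.2.1, h.choose_spec.2.2⟩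

/-- Let `F₁, …, Fₙ` be pairwise disjoint matchings of size `n` in a
graph, and `R = I.image c` a maximum-size rainbow matching. Letting `deg e` be the number
of unrepresented matchings `Fᵢ` for which `e` is half-`Fᵢ`-wasteful and
`D = {e ∈ R : deg e ≥ 5}`, there are sets `S(e) ⊆ R` for `e ∈ D` with
`|S(e)| ≥ deg e / 2`, every `f ∈ S(e)` having `deg f ≤ 2`, and `S(e) ∩ S(e') = ∅` for
distinct `e, e' ∈ D`. -/
theorem stmt_16 {V : Type*} [DecidableEq V] (G : SimpleGraph V) (n : ℕ)
    (F : Fin n → Finset (Sym2 V))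
    (hedges : ∀ i, ∀ e ∈ F i, e ∈ G.edgeSet)
    (hmatch : ∀ i, ∀ e ∈ F i, ∀ f ∈ F i, e ≠ f → ∀ v, v ∈ e → v ∉ f)
    (hsize : ∀ i, (F i).card = n)
    (hdisjF : ∀ i j, i ≠ j → Disjoint (F i) (F j))
    (I : Finset (Fin n)) (c : Fin n → Sym2 V)
    (hc : ∀ i ∈ I, c i ∈ F i)
    (hdisj : ∀ i ∈ I, ∀ j ∈ I, i ≠ j → ∀ v, v ∈ c i → v ∉ c j)
    (hmax : ∀ (J : Finset (Fin n)) (d : Fin n → Sym2 V),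
      (∀ i ∈ J, d i ∈ F i) →
      (∀ i ∈ J, ∀ j ∈ J, i ≠ j → ∀ v, v ∈ d i → v ∉ d j) →
      J.card ≤ I.card) :
    ∃ S : Sym2 V → Finset (Sym2 V),
      ∀ e ∈ I.image c, 5 ≤ hwDeg F I (I.image c) e →
        S e ⊆ I.image c ∧
        hwDeg F I (I.image c) e ≤ 2 * (S e).card ∧
        (∀ f ∈ S e, hwDeg F I (I.image c) f ≤ 2) ∧
        ∀ e' ∈ I.image c, 5 ≤ hwDeg F I (I.image c) e' → e ≠ e' →
          Disjoint (S e) (S e') := by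
  classical
  have C : Ctx G n F I c := ⟨hedges, hmatch, hdisjF, hc, hdisj, hmax⟩
  refine ⟨fun e => (Kfin F I (I.image c) e).image (fun i => partner F (I.image c) i e),
    ?_⟩
  intro e heR h5
  obtain ⟨j_e, hje, rfl⟩ := C.mem_R heR
  -- helper: data for a member of the image
  have hdata : ∀ {i : Fin n} {e' : Sym2 V}, i ∈ Kfin F I (I.image c) e' →
      i ∉ I ∧ partner F (I.image c) i e' ∈ I.image c ∧ partner F (I.image c) i e' ≠ e' ∧
        HalfWastefulPair (I.image c) (F i) e' (partner F (I.image c) i e') := by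
    intro i e' hi
    have h := Kfin_mem.mp hi
    exact ⟨h.1, (partner_spec h.2).1, (partner_spec h.2).2.1, (partner_spec h.2).2.2⟩
  refine ⟨?_, ?_, ?_, ?_⟩
  · -- S e ⊆ R
    intro x hx
    obtain ⟨i, hi, rfl⟩ := Finset.mem_image.mp hx
    exact (hdata hi).2.1
  · -- deg e ≤ 2 |S e|
    rw [hwDeg_eq_card]
    have hfib := Finset.card_eq_sum_card_fiberwise
      (fun i (hi : i ∈ Kfin F I (I.image c) (c j_e)) =>
        Finset.mem_image_of_mem (fun i => partner F (I.image c) i (c j_e)) hi)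
    rw [hfib]
    have hbound : ∀ x ∈ (Kfin F I (I.image c) (c j_e)).image
        (fun i => partner F (I.image c) i (c j_e)),
        ((Kfin F I (I.image c) (c j_e)).filter
          (fun i => partner F (I.image c) i (c j_e) = x)).card ≤ 2 := by
      intro x hx
      obtain ⟨i0, hi0, rfl⟩ := Finset.mem_image.mp hx
      obtain ⟨hi0I, hxR, hxne, hxpair⟩ := hdata hi0
      obtain ⟨j_f, hjf, hcf⟩ := C.mem_R hxR
      have hjej : j_e ≠ j_f := by
        intro h
        exact hxne (by rw [← hcf, ← h])
      have hdeg2 : hwDeg F I (I.image c) (c j_f) ≤ 2 :=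
        C.claimC hje hjf hjej hi0I (hcf ▸ hxpair) h5
      rw [hwDeg_eq_card] at hdeg2
      refine le_trans (Finset.card_le_card ?_) (hcf ▸ hdeg2)
      intro i hi
      have hi' := Finset.mem_filter.mp hi
      obtain ⟨hiI, hiR, hine, hipair⟩ := hdata hi'.1
      rw [hi'.2] at hipair hine
      exact Kfin_mem.mpr ⟨hiI, ⟨c j_e, heR, fun h => hine h.symm, hipair.symm⟩⟩
    calc ∑ x ∈ (Kfin F I (I.image c) (c j_e)).image
          (fun i => partner F (I.image c) i (c j_e)),
          ((Kfin F I (I.image c) (c j_e)).filter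
            (fun i => partner F (I.image c) i (c j_e) = x)).card
        ≤ ((Kfin F I (I.image c) (c j_e)).image
            (fun i => partner F (I.image c) i (c j_e))).card • 2 :=
          Finset.sum_le_card_nsmul _ _ 2 hbound
      _ = 2 * ((Kfin F I (I.image c) (c j_e)).image
            (fun i => partner F (I.image c) i (c j_e))).card := by
          rw [smul_eq_mul, mul_comm]
  · -- members of S e have degree ≤ 2
    intro x hx
    obtain ⟨i, hi, rfl⟩ := Finset.mem_image.mp hx
    obtain ⟨hiI, hxR, hxne, hxpair⟩ := hdata hi
    obtain ⟨j_f, hjf, hcf⟩ := C.mem_R hxR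
    have hjej : j_e ≠ j_f := fun h => hxne (by rw [← hcf, ← h])
    rw [← hcf]
    exact C.claimC hje hjf hjej hiI (hcf ▸ hxpair) h5
  · -- disjointness
    intro e' he'R h5' hne
    obtain ⟨j_e', hje', rfl⟩ := C.mem_R he'R
    rw [Finset.disjoint_left]
    intro x hx hx'
    obtain ⟨i, hi, rfl⟩ := Finset.mem_image.mp hx
    obtain ⟨i', hi', heq⟩ := Finset.mem_image.mp hx'
    obtain ⟨hiI, hxR, hxne, hxpair⟩ := hdata hi
    obtain ⟨hi'I, -, hx'ne, hx'pair⟩ := hdata hi'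
    rw [heq] at hx'pair hx'ne
    obtain ⟨j_x, hjx, hcx⟩ := C.mem_R hxR
    have hjeje' : j_e ≠ j_e' := fun h => hne (by rw [h])
    have hjejx : j_e ≠ j_x := fun h => hxne (by rw [← hcx, ← h])
    have hje'jx : j_e' ≠ j_x := fun h => hx'ne (by rw [← hcx, ← h])
    have hpair1 : HalfWastefulPair (I.image c) (F i) (c j_e) (c j_x) := hcx ▸ hxpair
    have hpair2 : HalfWastefulPair (I.image c) (F i') (c j_e') (c j_x) := hcx ▸ hx'pair
    by_cases hii : i = i'
    · subst hii
      exact C.sameG hiI hje hje' hjx hjeje' hjejx hje'jx hpair1 hpair2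
    · exact C.crossG hiI hi'I hii hje hje' hjx hjeje' hjejx hje'jx hpair1 hpair2 h5 h5'
end

section
/- Let F_1, …, F_n be pairwise disjoint matchings of size n in a graph, and let R be a rainbow matching of maximum size q. For e ∈ R let HW(e) be the set of unrepresented matchings F_i for which e is half-F_i-wasteful. Then Σ_{e ∈ R} |HW(e)| ≤ 4q. -/
section AKZ

variable {V : Type*} [DecidableEq V]

lemma sym2_eq_of_mem {e : Sym2 V} {x a : V} (hx : x ∈ e) (ha : a ∈ e) (hne : x ≠ a) :
    e = s(x, a) := by
  obtain ⟨⟨p, q⟩, rfl⟩ := e.exists_rep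
  simp only [Sym2.mem_iff] at hx ha
  rcases hx with rfl | rfl <;> rcases ha with rfl | rfl <;> simp_all [Sym2.eq_swap]

structure Cfg (V : Type*) [DecidableEq V] where
  n : ℕ
  G : SimpleGraph V
  F : Fin n → Finset (Sym2 V)
  I : Finset (Fin n)
  c : Fin n → Sym2 V
  nv : Nonempty V
  hedges : ∀ i, ∀ e ∈ F i, e ∈ G.edgeSet
  hmatch : ∀ i, ∀ e ∈ F i, ∀ f ∈ F i, e ≠ f → ∀ v, v ∈ e → v ∉ f
  hdisjF : ∀ i j, i ≠ j → Disjoint (F i) (F j)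
  hc : ∀ i ∈ I, c i ∈ F i
  hdisj : ∀ i ∈ I, ∀ j ∈ I, i ≠ j → ∀ v, v ∈ c i → v ∉ c j
  hmax : ∀ (J : Finset (Fin n)) (d : Fin n → Sym2 V),
      (∀ i ∈ J, d i ∈ F i) →
      (∀ i ∈ J, ∀ j ∈ J, i ≠ j → ∀ v, v ∈ d i → v ∉ d j) →
      J.card ≤ I.card

/-- witness data for a half-wasteful incidence -/
structure WDat (V : Type*) where
  f : Sym2 V
  x : V
  u : V
  y : V
  z : V
  a : V
  b : V

namespace Cfg

variable (C : Cfg V)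

def R : Finset (Sym2 V) := C.I.image C.c

def Out (u : V) : Prop := ∀ e ∈ C.R, u ∉ e

/-- The specification of the witness data for incidence `(i, e)`:
`e = s(x, a)`, `f = s(y, b)`, the free edge at `e` is `s(x,u)`, the free edge at `f`
is `s(y,z)`, and the connector is `s(a,b)`. -/
structure WSpec (i : Fin C.n) (e : Sym2 V) (d : WDat V) : Prop where
  fR : d.f ∈ C.R
  fne : d.f ≠ e
  xe : d.x ∈ e
  ae : d.a ∈ e
  xa : d.x ≠ d.a
  yf : d.y ∈ d.f
  bf : d.b ∈ d.f
  yb : d.y ≠ d.b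
  outu : C.Out d.u
  outz : C.Out d.z
  xu : d.x ≠ d.u
  yz : d.y ≠ d.z
  geF : s(d.x, d.u) ∈ C.F i
  gfF : s(d.y, d.z) ∈ C.F i
  gefF : s(d.a, d.b) ∈ C.F i

def Wit (i : Fin C.n) (e : Sym2 V) : Prop := ∃ d : WDat V, C.WSpec i e d

variable {C}

lemma mem_R {e : Sym2 V} (he : e ∈ C.R) : ∃ k ∈ C.I, C.c k = e := by
  simpa [Cfg.R] using he

lemma R_mem_F {e : Sym2 V} (he : e ∈ C.R) : ∃ k ∈ C.I, C.c k = e ∧ e ∈ C.F k := by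
  obtain ⟨k, hk, hck⟩ := mem_R he
  exact ⟨k, hk, hck, hck ▸ C.hc k hk⟩

lemma F_nodiag {i : Fin C.n} {g : Sym2 V} (hg : g ∈ C.F i) : ¬ g.IsDiag :=
  C.G.not_isDiag_of_mem_edgeSet (C.hedges i g hg)

lemma R_nodiag {e : Sym2 V} (he : e ∈ C.R) : ¬ e.IsDiag := by
  obtain ⟨k, _, _, hF⟩ := R_mem_F he
  exact F_nodiag hF

lemma c_injOn : ∀ i ∈ C.I, ∀ j ∈ C.I, C.c i = C.c j → i = j := by
  intro i hi j hj hij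
  by_contra hne
  obtain ⟨⟨p, q⟩, hpq⟩ := (C.c i).exists_rep
  exact C.hdisj i hi j hj hne p (by rw [← hpq]; simp) (by rw [← hij, ← hpq]; simp)

lemma mem_R_unique {e f : Sym2 V} {v : V} (he : e ∈ C.R) (hf : f ∈ C.R)
    (hv : v ∈ e) (hv' : v ∈ f) : e = f := by
  obtain ⟨k, hk, rfl⟩ := mem_R he
  obtain ⟨l, hl, rfl⟩ := mem_R hf
  by_contra hne
  exact C.hdisj k hk l hl (fun h => hne (by rw [h])) v hv hv'

lemma F_ne_R {i : Fin C.n} {g e : Sym2 V} (hi : i ∉ C.I) (hg : g ∈ C.F i)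
    (he : e ∈ C.R) : g ≠ e := by
  obtain ⟨k, hk, _, hF⟩ := R_mem_F he
  rintro rfl
  exact (Finset.disjoint_left.mp (C.hdisjF i k (fun h => hi (h ▸ hk))) hg) hF

lemma F_cross_ne {i j : Fin C.n} {g g' : Sym2 V} (hij : i ≠ j) (hg : g ∈ C.F i)
    (hg' : g' ∈ C.F j) : g ≠ g' := by
  rintro rfl
  exact (Finset.disjoint_left.mp (C.hdisjF i j hij) hg) hg'

lemma aug (S N : Finset (Fin C.n)) (hS : S ⊆ C.I)
    (hNI : ∀ j ∈ N, j ∉ C.I) (g : Fin C.n → Sym2 V)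
    (hg : ∀ j ∈ N, g j ∈ C.F j)
    (hgg : ∀ j ∈ N, ∀ k ∈ N, j ≠ k → ∀ v, v ∈ g j → v ∉ g k)
    (hgR : ∀ j ∈ N, ∀ v, v ∈ g j → ∀ k ∈ C.I, v ∈ C.c k → k ∈ S)
    (hcard : S.card < N.card) : False := by
  classical
  set J : Finset (Fin C.n) := (C.I \ S) ∪ N with hJ
  set d : Fin C.n → Sym2 V := fun j => if j ∈ N then g j else C.c j with hd
  have hIN : ∀ j ∈ C.I, j ∉ N := fun j hj hjN => hNI j hjN hj
  have hmem : ∀ j ∈ J, d j ∈ C.F j := by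
    intro j hj
    rcases Finset.mem_union.mp hj with h | h
    · have hjI := (Finset.mem_sdiff.mp h).1
      rw [hd]; simp only [if_neg (hIN j hjI)]
      exact C.hc j hjI
    · rw [hd]; simp only [if_pos h]; exact hg j h
  have hpair : ∀ j ∈ J, ∀ k ∈ J, j ≠ k → ∀ v, v ∈ d j → v ∉ d k := by
    intro j hj k hk hjk v hv hv'
    rcases Finset.mem_union.mp hj with h | h <;> rcases Finset.mem_union.mp hk with h' | h'
    · have hjI := (Finset.mem_sdiff.mp h).1
      have hkI := (Finset.mem_sdiff.mp h').1
      rw [hd] at hv hv'; simp only [if_neg (hIN j hjI), if_neg (hIN k hkI)] at hv hv'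
      exact C.hdisj j hjI k hkI hjk v hv hv'
    · have hjI := (Finset.mem_sdiff.mp h).1
      rw [hd] at hv hv'; simp only [if_neg (hIN j hjI), if_pos h'] at hv hv'
      exact (Finset.mem_sdiff.mp h).2 (hgR k h' v hv' j hjI hv)
    · have hkI := (Finset.mem_sdiff.mp h').1
      rw [hd] at hv hv'; simp only [if_pos h, if_neg (hIN k hkI)] at hv hv'
      exact (Finset.mem_sdiff.mp h').2 (hgR j h v hv k hkI hv')
    · rw [hd] at hv hv'; simp only [if_pos h, if_pos h'] at hv hv'
      exact hgg j h k h' hjk v hv hv'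
  have hcardJ : J.card = C.I.card - S.card + N.card := by
    rw [hJ, Finset.card_union_of_disjoint, Finset.card_sdiff_of_subset hS]
    exact Finset.disjoint_left.mpr fun j hj => hIN j (Finset.mem_sdiff.mp hj).1
  have hle := C.hmax J d hmem hpair
  have hSI : S.card ≤ C.I.card := Finset.card_le_card hS
  omega

/-- Extraction of witness data from a half-wasteful incidence. -/
lemma wit_of {i : Fin C.n} {e : Sym2 V} (hi : i ∉ C.I) (he : e ∈ C.R)
    (hw : HalfWasteful C.R (C.F i) e) : C.Wit i e := by
  obtain ⟨f, hfR, hfe, ge, hge, gf, hgf, gef, hgef, hMOe, hMOf, hMe, hMf⟩ := hw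
  have hdisjef : ∀ v, v ∈ e → v ∉ f := fun v hv hv' =>
    hfe (mem_R_unique hfR he hv' hv)
  obtain ⟨⟨x, hxge, hxe⟩, honlye⟩ := hMOe
  obtain ⟨⟨y, hygf, hyf⟩, honlyf⟩ := hMOf
  set u := Sym2.Mem.other' hxge with hu
  have hgeq : s(x, u) = ge := Sym2.other_spec' hxge
  have hxu : x ≠ u := by
    intro h
    exact F_nodiag hge (by rw [← hgeq, Sym2.mk_isDiag_iff]; exact h)
  have houtu : C.Out u := by
    intro e' he' hue'
    by_cases h : e' = e
    · subst h
      have : e' = ge := by rw [sym2_eq_of_mem hxe hue' hxu, hgeq]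
      exact F_ne_R hi hge he' this.symm
    · exact honlye e' he' h ⟨u, by rw [← hgeq]; simp, hue'⟩
  set z := Sym2.Mem.other' hygf with hz
  have hgfq : s(y, z) = gf := Sym2.other_spec' hygf
  have hyz : y ≠ z := by
    intro h
    exact F_nodiag hgf (by rw [← hgfq, Sym2.mk_isDiag_iff]; exact h)
  have houtz : C.Out z := by
    intro e' he' hze'
    by_cases h : e' = f
    · subst h
      have : e' = gf := by rw [sym2_eq_of_mem hyf hze' hyz, hgfq]
      exact F_ne_R hi hgf he' this.symm
    · exact honlyf e' he' h ⟨z, by rw [← hgfq]; simp, hze'⟩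
  obtain ⟨a, hagef, hae⟩ := hMe
  set b := Sym2.Mem.other' hagef with hb
  have hgefq : s(a, b) = gef := Sym2.other_spec' hagef
  have hab : a ≠ b := by
    intro h
    exact F_nodiag hgef (by rw [← hgefq, Sym2.mk_isDiag_iff]; exact h)
  have hbf : b ∈ f := by
    obtain ⟨w, hw1, hw2⟩ := hMf
    rw [← hgefq, Sym2.mem_iff] at hw1
    rcases hw1 with rfl | rfl
    · exact absurd hw2 (hdisjef w hae)
    · exact hw2
  have hgefge : gef ≠ ge := by
    rintro rfl
    exact honlye f hfR hfe ⟨b, by rw [← hgefq]; simp, hbf⟩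
  have hgefgf : gef ≠ gf := by
    rintro rfl
    exact honlyf e he (fun h => hfe h.symm) ⟨a, by rw [← hgefq]; simp, hae⟩
  have hxa : x ≠ a := by
    intro h
    exact C.hmatch i ge hge gef hgef (fun hh => hgefge hh.symm) x hxge
      (by rw [← hgefq, h]; simp)
  have hyb : y ≠ b := by
    intro h
    exact C.hmatch i gf hgf gef hgef (fun hh => hgefgf hh.symm) y hygf
      (by rw [← hgefq, h]; simp)
  exact ⟨⟨f, x, u, y, z, a, b⟩,
    hfR, hfe, hxe, hae, hxa, hyf, hbf, hyb, houtu, houtz, hxu, hyz,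
    hgeq.symm ▸ hge, hgfq.symm ▸ hgf, hgefq.symm ▸ hgef⟩

section Defs

open Classical in
noncomputable def P (C : Cfg V) : Finset (Fin C.n × Sym2 V) :=
  (Finset.univ ×ˢ C.R).filter fun p => p.1 ∉ C.I ∧ HalfWasteful C.R (C.F p.1) p.2

lemma mem_P {p : Fin C.n × Sym2 V} :
    p ∈ C.P ↔ p.2 ∈ C.R ∧ p.1 ∉ C.I ∧ HalfWasteful C.R (C.F p.1) p.2 := by
  classical
  simp only [Cfg.P, Finset.mem_filter, Finset.mem_product, Finset.mem_univ, true_and]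

lemma wit_of_mem {p : Fin C.n × Sym2 V} (hp : p ∈ C.P) : C.Wit p.1 p.2 := by
  obtain ⟨h1, h2, h3⟩ := mem_P.mp hp
  exact wit_of h2 h1 h3

open Classical in
noncomputable def tup (C : Cfg V) (p : Fin C.n × Sym2 V) : WDat V :=
  if h : C.Wit p.1 p.2 then h.choose
  else (fun v => ⟨s(v,v), v, v, v, v, v, v⟩) (Classical.choice C.nv)

lemma tup_spec {p : Fin C.n × Sym2 V} (hp : p ∈ C.P) : C.WSpec p.1 p.2 (C.tup p) := by
  have h := wit_of_mem hp
  unfold Cfg.tup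
  rw [dif_pos h]
  exact h.choose_spec

open Classical in
/-- incidences at `e` whose free edge is based at the vertex `x` -/
noncomputable def Phi (C : Cfg V) (e : Sym2 V) (x : V) : Finset (Fin C.n × Sym2 V) :=
  C.P.filter fun q => q.2 = e ∧ (C.tup q).x = x

def kept (C : Cfg V) (p : Fin C.n × Sym2 V) : Prop :=
  (C.Phi p.2 (C.tup p).x).card ≤ 3

open Classical in
noncomputable def target (C : Cfg V) (p : Fin C.n × Sym2 V) : Sym2 V :=
  if C.kept p then p.2 else (C.tup p).f

lemma mem_Phi {e : Sym2 V} {x : V} {q : Fin C.n × Sym2 V} :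
    q ∈ C.Phi e x ↔ q ∈ C.P ∧ q.2 = e ∧ (C.tup q).x = x := by
  classical
  simp [Cfg.Phi]

lemma self_mem_Phi {p : Fin C.n × Sym2 V} (hp : p ∈ C.P) :
    p ∈ C.Phi p.2 (C.tup p).x := mem_Phi.mpr ⟨hp, rfl, rfl⟩

lemma eq_of_fst_eq {e : Sym2 V} {q q' : Fin C.n × Sym2 V}
    (h2 : q.2 = e) (h2' : q'.2 = e) (h1 : q.1 = q'.1) : q = q' :=
  Prod.ext h1 (h2.trans h2'.symm)

lemma target_mem_R {p : Fin C.n × Sym2 V} (hp : p ∈ C.P) : C.target p ∈ C.R := by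
  rw [Cfg.target]
  split
  · exact (mem_P.mp hp).1
  · exact (tup_spec hp).fR

/-- if `p` is a "tower" incidence, we can find spare incidences at the same slot
avoiding two indices and one outside-vertex. -/
lemma spares {p : Fin C.n × Sym2 V} (hp : p ∈ C.P) (hk : ¬ C.kept p)
    (j₁ j₂ : Fin C.n) (v : V) :
    ∃ q ∈ C.P, q.2 = p.2 ∧ (C.tup q).x = (C.tup p).x ∧
      q.1 ≠ j₁ ∧ q.1 ≠ j₂ ∧ (C.tup q).u ≠ v := by
  classical
  set Φ := C.Phi p.2 (C.tup p).x with hΦ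
  have hcard : 4 ≤ Φ.card := by
    rw [Cfg.kept] at hk; rw [hΦ]; omega
  by_contra hcon
  push_neg at hcon
  have hsub : Φ ⊆ (Φ.filter fun q => q.1 = j₁) ∪ (Φ.filter fun q => q.1 = j₂) ∪
      (Φ.filter fun q => (C.tup q).u = v) := by
    intro q hq
    obtain ⟨hqP, hq2, hqx⟩ := mem_Phi.mp hq
    by_cases h1 : q.1 = j₁
    · simp [Finset.mem_union, Finset.mem_filter, hq, h1]
    by_cases h2 : q.1 = j₂
    · simp [Finset.mem_union, Finset.mem_filter, hq, h2]
    have := hcon q hqP hq2 hqx h1 h2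
    simp [Finset.mem_union, Finset.mem_filter, hq, this]
  have c1 : (Φ.filter fun q => q.1 = j₁).card ≤ 1 := by
    rw [Finset.card_le_one]
    intro q hq q' hq'
    simp only [Finset.mem_filter] at hq hq'
    exact eq_of_fst_eq (mem_Phi.mp hq.1).2.1 (mem_Phi.mp hq'.1).2.1 (hq.2.trans hq'.2.symm)
  have c2 : (Φ.filter fun q => q.1 = j₂).card ≤ 1 := by
    rw [Finset.card_le_one]
    intro q hq q' hq'
    simp only [Finset.mem_filter] at hq hq'
    exact eq_of_fst_eq (mem_Phi.mp hq.1).2.1 (mem_Phi.mp hq'.1).2.1 (hq.2.trans hq'.2.symm)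
  have c3 : (Φ.filter fun q => (C.tup q).u = v).card ≤ 1 := by
    rw [Finset.card_le_one]
    intro q hq q' hq'
    simp only [Finset.mem_filter] at hq hq'
    obtain ⟨hqP, hq2, hqx⟩ := mem_Phi.mp hq.1
    obtain ⟨hqP', hq2', hqx'⟩ := mem_Phi.mp hq'.1
    by_cases h1 : q.1 = q'.1
    · exact eq_of_fst_eq hq2 hq2' h1
    · exfalso
      have hge := (tup_spec hqP).geF
      have hge' := (tup_spec hqP').geF
      rw [hqx, hq.2] at hge
      rw [hqx', hq'.2] at hge'
      exact F_cross_ne h1 hge hge' rfl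
  have := Finset.card_le_card hsub
  have := Finset.card_union_le ((Φ.filter fun q => q.1 = j₁) ∪ (Φ.filter fun q => q.1 = j₂))
    (Φ.filter fun q => (C.tup q).u = v)
  have := Finset.card_union_le (Φ.filter fun q => q.1 = j₁) (Φ.filter fun q => q.1 = j₂)
  omega

/-- vertex-condition helper for augmentations with two removed edges -/
lemma vsub {e₁ f₀ : Sym2 V} {k₁ k₂ : Fin C.n} (he₁ : e₁ ∈ C.R) (hf₀ : f₀ ∈ C.R)
    (hk₁I : k₁ ∈ C.I) (hc₁ : C.c k₁ = e₁) (hk₂I : k₂ ∈ C.I) (hc₂ : C.c k₂ = f₀) {v : V}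
    (hv : v ∈ e₁ ∨ v ∈ f₀ ∨ C.Out v) : ∀ k ∈ C.I, v ∈ C.c k → k ∈ ({k₁, k₂} : Finset (Fin C.n)) := by
  intro k hk hvk
  have hckR : C.c k ∈ C.R := Finset.mem_image_of_mem _ hk
  rcases hv with h | h | h
  · have : C.c k = C.c k₁ := by rw [hc₁]; exact mem_R_unique hckR he₁ hvk h
    simp [c_injOn k hk k₁ hk₁I this]
  · have : C.c k = C.c k₂ := by rw [hc₂]; exact mem_R_unique hckR hf₀ hvk h
    simp [c_injOn k hk k₂ hk₂I this]
  · exact absurd hvk (h _ hckR)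

/-- augmentation with one removed edge and two new edges -/
lemma aug2 {f₀ : Sym2 V} (hf₀ : f₀ ∈ C.R) {i₁ i₂ : Fin C.n} (h12 : i₁ ≠ i₂)
    (hi₁ : i₁ ∉ C.I) (hi₂ : i₂ ∉ C.I) {g₁ g₂ : Sym2 V} (hg₁ : g₁ ∈ C.F i₁)
    (hg₂ : g₂ ∈ C.F i₂) (hd : ∀ v, v ∈ g₁ → v ∉ g₂)
    (hv₁ : ∀ v, v ∈ g₁ → v ∈ f₀ ∨ C.Out v) (hv₂ : ∀ v, v ∈ g₂ → v ∈ f₀ ∨ C.Out v) :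
    False := by
  classical
  obtain ⟨k₂, hk₂I, hc₂⟩ := mem_R hf₀
  set g : Fin C.n → Sym2 V := fun j => if j = i₁ then g₁ else g₂ with hgdef
  have hgi₁ : g i₁ = g₁ := by simp [hgdef]
  have hgi₂ : g i₂ = g₂ := by simp [hgdef, Ne.symm h12]
  have hmem2 : ∀ j ∈ ({i₁, i₂} : Finset (Fin C.n)),
      j = i₁ ∧ g j = g₁ ∨ j = i₂ ∧ g j = g₂ := by
    intro j hj
    rcases Finset.mem_insert.mp hj with rfl | hj
    · exact Or.inl ⟨rfl, hgi₁⟩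
    · rw [Finset.mem_singleton.mp hj]; exact Or.inr ⟨rfl, hgi₂⟩
  refine aug {k₂} {i₁, i₂} (by simp [hk₂I]) ?_ g ?_ ?_ ?_ ?_
  · intro j hj
    rcases hmem2 j hj with ⟨rfl, _⟩ | ⟨rfl, _⟩ <;> assumption
  · intro j hj
    rcases hmem2 j hj with ⟨rfl, h⟩ | ⟨rfl, h⟩ <;> rw [h] <;> assumption
  · intro j hj k hk hjk v hv hv'
    rcases hmem2 j hj with ⟨rfl, h⟩ | ⟨rfl, h⟩ <;>
      rcases hmem2 k hk with ⟨rfl, h'⟩ | ⟨rfl, h'⟩ <;>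
        rw [h] at hv <;> rw [h'] at hv'
    · exact hjk rfl
    · exact hd v hv hv'
    · exact hd v hv' hv
    · exact hjk rfl
  · intro j hj v hv k hk hvk
    have hout : v ∈ f₀ ∨ C.Out v := by
      rcases hmem2 j hj with ⟨rfl, h⟩ | ⟨rfl, h⟩ <;> rw [h] at hv
      · exact hv₁ v hv
      · exact hv₂ v hv
    have hckR : C.c k ∈ C.R := Finset.mem_image_of_mem _ hk
    rcases hout with h | h
    · have : C.c k = C.c k₂ := by rw [hc₂]; exact mem_R_unique hckR hf₀ hvk h
      simp [c_injOn k hk k₂ hk₂I this]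
    · exact absurd hvk (h _ hckR)
  · rw [Finset.card_singleton, Finset.card_pair h12]
    omega

/-- augmentation with two removed edges and three new edges -/
lemma aug3 {e₁ f₀ : Sym2 V} (he₁ : e₁ ∈ C.R) (hf₀ : f₀ ∈ C.R) (hne : e₁ ≠ f₀)
    {i₁ i₂ i₃ : Fin C.n} (h12 : i₁ ≠ i₂) (h13 : i₁ ≠ i₃) (h23 : i₂ ≠ i₃)
    (hi₁ : i₁ ∉ C.I) (hi₂ : i₂ ∉ C.I) (hi₃ : i₃ ∉ C.I)
    {g₁ g₂ g₃ : Sym2 V} (hg₁ : g₁ ∈ C.F i₁) (hg₂ : g₂ ∈ C.F i₂) (hg₃ : g₃ ∈ C.F i₃)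
    (hd12 : ∀ v, v ∈ g₁ → v ∉ g₂) (hd13 : ∀ v, v ∈ g₁ → v ∉ g₃)
    (hd23 : ∀ v, v ∈ g₂ → v ∉ g₃)
    (hv₁ : ∀ v, v ∈ g₁ → v ∈ e₁ ∨ v ∈ f₀ ∨ C.Out v)
    (hv₂ : ∀ v, v ∈ g₂ → v ∈ e₁ ∨ v ∈ f₀ ∨ C.Out v)
    (hv₃ : ∀ v, v ∈ g₃ → v ∈ e₁ ∨ v ∈ f₀ ∨ C.Out v) : False := by
  classical
  obtain ⟨k₁, hk₁I, hc₁⟩ := mem_R he₁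
  obtain ⟨k₂, hk₂I, hc₂⟩ := mem_R hf₀
  have hk12 : k₁ ≠ k₂ := by
    rintro rfl; exact hne (hc₁.symm.trans hc₂)
  set g : Fin C.n → Sym2 V := fun j => if j = i₁ then g₁ else if j = i₂ then g₂ else g₃
    with hgdef
  have hgi₁ : g i₁ = g₁ := by simp [hgdef]
  have hgi₂ : g i₂ = g₂ := by simp [hgdef, Ne.symm h12]
  have hgi₃ : g i₃ = g₃ := by simp [hgdef, Ne.symm h13, Ne.symm h23]
  have hmem3 : ∀ j ∈ ({i₁, i₂, i₃} : Finset (Fin C.n)),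
      j = i₁ ∧ g j = g₁ ∨ j = i₂ ∧ g j = g₂ ∨ j = i₃ ∧ g j = g₃ := by
    intro j hj
    rcases Finset.mem_insert.mp hj with rfl | hj
    · exact Or.inl ⟨rfl, hgi₁⟩
    rcases Finset.mem_insert.mp hj with rfl | hj
    · exact Or.inr (Or.inl ⟨rfl, hgi₂⟩)
    · rw [Finset.mem_singleton.mp hj]; exact Or.inr (Or.inr ⟨rfl, hgi₃⟩)
  refine aug {k₁, k₂} {i₁, i₂, i₃} ?_ ?_ g ?_ ?_ ?_ ?_
  · intro k hk
    rcases Finset.mem_insert.mp hk with rfl | hk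
    · exact hk₁I
    · rw [Finset.mem_singleton.mp hk]; exact hk₂I
  · intro j hj
    rcases hmem3 j hj with ⟨rfl, _⟩ | ⟨rfl, _⟩ | ⟨rfl, _⟩ <;> assumption
  · intro j hj
    rcases hmem3 j hj with ⟨rfl, h⟩ | ⟨rfl, h⟩ | ⟨rfl, h⟩ <;> rw [h] <;> assumption
  · intro j hj k hk hjk v hv hv'
    rcases hmem3 j hj with ⟨rfl, h⟩ | ⟨rfl, h⟩ | ⟨rfl, h⟩ <;>
      rcases hmem3 k hk with ⟨rfl, h'⟩ | ⟨rfl, h'⟩ | ⟨rfl, h'⟩ <;>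
        rw [h] at hv <;> rw [h'] at hv'
    · exact hjk rfl
    · exact hd12 v hv hv'
    · exact hd13 v hv hv'
    · exact hd12 v hv' hv
    · exact hjk rfl
    · exact hd23 v hv hv'
    · exact hd13 v hv' hv
    · exact hd23 v hv' hv
    · exact hjk rfl
  · intro j hj v hv k hk hvk
    have hout : v ∈ e₁ ∨ v ∈ f₀ ∨ C.Out v := by
      rcases hmem3 j hj with ⟨rfl, h⟩ | ⟨rfl, h⟩ | ⟨rfl, h⟩ <;> rw [h] at hv
      · exact hv₁ v hv
      · exact hv₂ v hv
      · exact hv₃ v hv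
    exact vsub he₁ hf₀ hk₁I hc₁ hk₂I hc₂ hout k hk hvk
  · have e2 : ({k₁, k₂} : Finset (Fin C.n)).card = 2 := Finset.card_pair hk12
    have e3 : ({i₁, i₂, i₃} : Finset (Fin C.n)).card = 3 := by
      rw [Finset.card_insert_of_notMem (by simp [h12, h13]), Finset.card_pair h23]
    omega

end Defs

section Core

lemma ne_of_out {u v : V} {e : Sym2 V} (hu : C.Out u) (he : e ∈ C.R) (hv : v ∈ e) :
    v ≠ u := fun h => hu e he (h ▸ hv)

lemma ne_of_edges {e f : Sym2 V} {v w : V} (he : e ∈ C.R) (hf : f ∈ C.R) (hef : e ≠ f)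
    (hv : v ∈ e) (hw : w ∈ f) : v ≠ w := fun h => hef (mem_R_unique he hf hv (h ▸ hw))

lemma sdisj {α β γ δ : V} (h1 : α ≠ γ) (h2 : α ≠ δ) (h3 : β ≠ γ) (h4 : β ≠ δ) :
    ∀ v, v ∈ s(α, β) → v ∉ s(γ, δ) := by
  intro v hv hv'
  rw [Sym2.mem_iff] at hv hv'
  rcases hv with rfl | rfl <;> rcases hv' with h | h <;> tauto

lemma smem {α β : V} {Q : V → Prop} (hα : Q α) (hβ : Q β) :
    ∀ v, v ∈ s(α, β) → Q v := by
  intro v hv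
  rw [Sym2.mem_iff] at hv
  rcases hv with rfl | rfl <;> assumption

lemma b_eq {p : Fin C.n × Sym2 V} (hp : p ∈ C.P) {f₀ : Sym2 V} {sv m : V}
    (hf₀eq : f₀ = s(sv, m)) (hfp : (C.tup p).f = f₀) (hyp : (C.tup p).y = sv) :
    (C.tup p).b = m := by
  have spec := tup_spec hp
  have hb : (C.tup p).b ∈ f₀ := hfp ▸ spec.bf
  rw [hf₀eq, Sym2.mem_iff] at hb
  rcases hb with h | h
  · exact absurd (hyp.trans h.symm) spec.yb
  · exact h

open Classical in
/-- kept incidences at `f₀` based at the vertex `x` -/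
noncomputable def Kset (C : Cfg V) (f₀ : Sym2 V) (x : V) : Finset (Fin C.n × Sym2 V) :=
  C.P.filter fun q => C.kept q ∧ q.2 = f₀ ∧ (C.tup q).x = x

open Classical in
/-- exported (tower) incidences whose partner edge is `f₀` with partner slot `y` -/
noncomputable def Eset (C : Cfg V) (f₀ : Sym2 V) (y : V) : Finset (Fin C.n × Sym2 V) :=
  C.P.filter fun q => ¬ C.kept q ∧ (C.tup q).f = f₀ ∧ (C.tup q).y = y

lemma mem_Kset {f₀ : Sym2 V} {x : V} {q : Fin C.n × Sym2 V} :
    q ∈ C.Kset f₀ x ↔ q ∈ C.P ∧ C.kept q ∧ q.2 = f₀ ∧ (C.tup q).x = x := by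
  classical
  simp [Cfg.Kset]

lemma mem_Eset {f₀ : Sym2 V} {y : V} {q : Fin C.n × Sym2 V} :
    q ∈ C.Eset f₀ y ↔ q ∈ C.P ∧ ¬ C.kept q ∧ (C.tup q).f = f₀ ∧ (C.tup q).y = y := by
  classical
  simp [Cfg.Eset]

/-- **Key lemma** (the (★) argument): if `p` is a tower incidence with partner edge
`f = (C.tup p).f` and partner slot `y = (C.tup p).y`, then every incidence at the
edge `f` based at the slot `y` belongs to the same matching as `p`. -/
lemma no_other_based {p q : Fin C.n × Sym2 V} (hp : p ∈ C.P) (hnk : ¬ C.kept p)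
    (hq : q ∈ C.P) (hq2 : q.2 = (C.tup p).f) (hqx : (C.tup q).x = (C.tup p).y) :
    q.1 = p.1 := by
  by_contra hne
  have specp := tup_spec hp
  have specq := tup_spec hq
  have heR : p.2 ∈ C.R := (mem_P.mp hp).1
  have hfR : (C.tup p).f ∈ C.R := specp.fR
  have hef : p.2 ≠ (C.tup p).f := fun h => specp.fne h.symm
  obtain ⟨q₀, hq₀P, hq₀2, hq₀x, hq₀1p, hq₀1q, hq₀u⟩ :=
    spares hp hnk p.1 q.1 (C.tup q).u
  have specq₀ := tup_spec hq₀P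
  -- the three edges
  have hg₁ : s((C.tup p).a, (C.tup p).b) ∈ C.F p.1 := specp.gefF
  have hg₂ : s((C.tup p).x, (C.tup q₀).u) ∈ C.F q₀.1 := by
    have := specq₀.geF
    rwa [hq₀x] at this
  have hg₃ : s((C.tup p).y, (C.tup q).u) ∈ C.F q.1 := by
    have := specq.geF
    rwa [hqx] at this
  have houtu₀ : C.Out (C.tup q₀).u := specq₀.outu
  have houtuq : C.Out (C.tup q).u := specq.outu
  have hae : (C.tup p).a ∈ p.2 := specp.ae
  have hxe : (C.tup p).x ∈ p.2 := specp.xe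
  have hbf : (C.tup p).b ∈ (C.tup p).f := specp.bf
  have hyf : (C.tup p).y ∈ (C.tup p).f := specp.yf
  exact aug3 heR hfR hef (Ne.symm hq₀1p) (fun h => hne h.symm) hq₀1q
    (mem_P.mp hp).2.1 (mem_P.mp hq₀P).2.1 (mem_P.mp hq).2.1 hg₁ hg₂ hg₃
    (sdisj (Ne.symm specp.xa) (ne_of_out houtu₀ heR hae)
      (ne_of_edges hfR heR (Ne.symm hef) hbf hxe) (ne_of_out houtu₀ hfR hbf))
    (sdisj (ne_of_edges heR hfR hef hae hyf) (ne_of_out houtuq heR hae)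
      (Ne.symm specp.yb) (ne_of_out houtuq hfR hbf))
    (sdisj (ne_of_edges heR hfR hef hxe hyf) (ne_of_out houtuq heR hxe)
      (Ne.symm (ne_of_out houtu₀ hfR hyf)) hq₀u)
    (smem (Or.inl hae) (Or.inr (Or.inl hbf)))
    (smem (Or.inl hxe) (Or.inr (Or.inr houtu₀)))
    (smem (Or.inr (Or.inl hyf)) (Or.inr (Or.inr houtuq)))

/-- an exporter forces the kept incidences at its partner slot to be at most one -/
lemma Kset_le_one_of_Eset {f₀ : Sym2 V} {sv : V} {p : Fin C.n × Sym2 V}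
    (hpE : p ∈ C.Eset f₀ sv) : (C.Kset f₀ sv).card ≤ 1 := by
  obtain ⟨hpP, hnk, hpf, hpy⟩ := mem_Eset.mp hpE
  rw [Finset.card_le_one]
  intro q hq q' hq'
  obtain ⟨hqP, _, hq2, hqx⟩ := mem_Kset.mp hq
  obtain ⟨hqP', _, hq2', hqx'⟩ := mem_Kset.mp hq'
  have h1 : q.1 = p.1 := no_other_based hpP hnk hqP (hq2.trans hpf.symm) (hqx.trans hpy.symm)
  have h2 : q'.1 = p.1 := no_other_based hpP hnk hqP' (hq2'.trans hpf.symm) (hqx'.trans hpy.symm)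
  exact eq_of_fst_eq hq2 hq2' (h1.trans h2.symm)

end Core

section Bounds

/-- at most one tower incidence exports into a given slot -/
lemma Eset_card {f₀ : Sym2 V} {sv m : V} (hf₀R : f₀ ∈ C.R) (hf₀eq : f₀ = s(sv, m))
    (hsm : sv ≠ m) : (C.Eset f₀ sv).card ≤ 1 := by
  have hsv : sv ∈ f₀ := by rw [hf₀eq]; simp
  have hm : m ∈ f₀ := by rw [hf₀eq]; simp
  rw [Finset.card_le_one]
  intro p₁ hp₁ p₂ hp₂
  obtain ⟨hP₁, hnk₁, hf₁, hy₁⟩ := mem_Eset.mp hp₁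
  obtain ⟨hP₂, hnk₂, hf₂, hy₂⟩ := mem_Eset.mp hp₂
  have spec₁ := tup_spec hP₁
  have spec₂ := tup_spec hP₂
  have hb₁ : (C.tup p₁).b = m := b_eq hP₁ hf₀eq hf₁ hy₁
  have hb₂ : (C.tup p₂).b = m := b_eq hP₂ hf₀eq hf₂ hy₂
  have he₁R : p₁.2 ∈ C.R := (mem_P.mp hP₁).1
  have he₂R : p₂.2 ∈ C.R := (mem_P.mp hP₂).1
  have hef₁ : p₁.2 ≠ f₀ := fun h => spec₁.fne (hf₁.trans h.symm)
  have hef₂ : p₂.2 ≠ f₀ := fun h => spec₂.fne (hf₂.trans h.symm)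
  have hg₁ : s((C.tup p₁).a, m) ∈ C.F p₁.1 := hb₁ ▸ spec₁.gefF
  have hg₂' : s((C.tup p₂).a, m) ∈ C.F p₂.1 := hb₂ ▸ spec₂.gefF
  by_cases h1 : p₁.1 = p₂.1
  · -- same matching: connectors share `m`, hence coincide
    have heq : s((C.tup p₁).a, m) = s((C.tup p₂).a, m) := by
      by_contra hne
      exact C.hmatch p₁.1 _ hg₁ _ (h1 ▸ hg₂') hne m (by simp) (by simp)
    have ha₁m : (C.tup p₁).a ≠ m := ne_of_edges he₁R hf₀R hef₁ spec₁.ae hm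
    have haa : (C.tup p₁).a = (C.tup p₂).a := by
      rw [Sym2.eq_iff] at heq
      rcases heq with ⟨h, _⟩ | ⟨h, _⟩
      · exact h
      · exact absurd h ha₁m
    have h2 : p₁.2 = p₂.2 := mem_R_unique he₁R he₂R spec₁.ae (haa ▸ spec₂.ae)
    exact Prod.ext h1 h2
  · -- distinct matchings: augment
    exfalso
    obtain ⟨q₀, hq₀P, hq₀2, hq₀x, hq₀1p, hq₀1q, hq₀u⟩ :=
      spares hP₁ hnk₁ p₁.1 p₂.1 (C.tup p₂).z
    have specq₀ := tup_spec hq₀P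
    have hg₂ : s((C.tup p₁).x, (C.tup q₀).u) ∈ C.F q₀.1 := by
      have := specq₀.geF; rwa [hq₀x] at this
    have hg₃ : s(sv, (C.tup p₂).z) ∈ C.F p₂.1 := by
      have := spec₂.gfF; rwa [hy₂] at this
    have houtu₀ : C.Out (C.tup q₀).u := specq₀.outu
    have houtz₂ : C.Out (C.tup p₂).z := spec₂.outz
    exact aug3 he₁R hf₀R hef₁ (Ne.symm hq₀1p) h1 hq₀1q
      (mem_P.mp hP₁).2.1 (mem_P.mp hq₀P).2.1 (mem_P.mp hP₂).2.1 hg₁ hg₂ hg₃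
      (sdisj (Ne.symm spec₁.xa) (ne_of_out houtu₀ he₁R spec₁.ae)
        (ne_of_edges hf₀R he₁R (Ne.symm hef₁) hm spec₁.xe) (ne_of_out houtu₀ hf₀R hm))
      (sdisj (ne_of_edges he₁R hf₀R hef₁ spec₁.ae hsv) (ne_of_out houtz₂ he₁R spec₁.ae)
        (Ne.symm hsm) (ne_of_out houtz₂ hf₀R hm))
      (sdisj (ne_of_edges he₁R hf₀R hef₁ spec₁.xe hsv) (ne_of_out houtz₂ he₁R spec₁.xe)
        (Ne.symm (ne_of_out houtu₀ hf₀R hsv)) hq₀u)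
      (smem (Or.inl spec₁.ae) (Or.inr (Or.inl hm)))
      (smem (Or.inl spec₁.xe) (Or.inr (Or.inr houtu₀)))
      (smem (Or.inr (Or.inl hsv)) (Or.inr (Or.inr houtz₂)))

/-- an exporter to slot `sv` bounds kept incidences at the mate slot `m` -/
lemma Kmate_of_E {f₀ : Sym2 V} {sv m : V} (hf₀R : f₀ ∈ C.R) (hf₀eq : f₀ = s(sv, m))
    (hsm : sv ≠ m) {p : Fin C.n × Sym2 V} (hpE : p ∈ C.Eset f₀ sv) :
    (C.Kset f₀ m).card ≤ 2 ∧ ((C.Kset f₀ m).card = 2 → (C.Kset f₀ sv).card = 0) := by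
  classical
  have hsv : sv ∈ f₀ := by rw [hf₀eq]; simp
  have hm : m ∈ f₀ := by rw [hf₀eq]; simp
  obtain ⟨hPp, hnkp, hfp, hyp⟩ := mem_Eset.mp hpE
  have specp := tup_spec hPp
  have hgfp : s(sv, (C.tup p).z) ∈ C.F p.1 := by
    have := specp.gfF; rwa [hyp] at this
  have houtzp : C.Out (C.tup p).z := specp.outz
  -- claim (α): kept incidences at the mate slot from other matchings share outer vertex
  have halpha : ∀ q ∈ C.Kset f₀ m, q.1 ≠ p.1 → (C.tup q).u = (C.tup p).z := by
    intro q hq hne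
    obtain ⟨hPq, _, hq2, hqx⟩ := mem_Kset.mp hq
    have specq := tup_spec hPq
    have hgeq : s(m, (C.tup q).u) ∈ C.F q.1 := by
      have := specq.geF; rwa [hqx] at this
    have houtuq : C.Out (C.tup q).u := specq.outu
    by_contra hneu
    exact aug2 hf₀R (fun h => hne h.symm) (mem_P.mp hPp).2.1 (mem_P.mp hPq).2.1
      hgfp hgeq
      (sdisj hsm (ne_of_out houtuq hf₀R hsv) (Ne.symm (ne_of_out houtzp hf₀R hm))
        (fun h => hneu h.symm))
      (smem (Or.inl hsv) (Or.inr houtzp))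
      (smem (Or.inl hm) (Or.inr houtuq))
  have hsplit : C.Kset f₀ m =
      ((C.Kset f₀ m).filter fun q => q.1 = p.1) ∪
      ((C.Kset f₀ m).filter fun q => q.1 ≠ p.1) := (Finset.filter_union_filter_not_eq _ _).symm
  have hA : ((C.Kset f₀ m).filter fun q => q.1 = p.1).card ≤ 1 := by
    rw [Finset.card_le_one]
    intro q hq q' hq'
    simp only [Finset.mem_filter] at hq hq'
    exact eq_of_fst_eq (mem_Kset.mp hq.1).2.2.1 (mem_Kset.mp hq'.1).2.2.1
      (hq.2.trans hq'.2.symm)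
  have hB : ((C.Kset f₀ m).filter fun q => q.1 ≠ p.1).card ≤ 1 := by
    rw [Finset.card_le_one]
    intro q hq q' hq'
    simp only [Finset.mem_filter] at hq hq'
    by_cases h1 : q.1 = q'.1
    · exact eq_of_fst_eq (mem_Kset.mp hq.1).2.2.1 (mem_Kset.mp hq'.1).2.2.1 h1
    · exfalso
      have hu : (C.tup q).u = (C.tup q').u :=
        (halpha q hq.1 hq.2).trans (halpha q' hq'.1 hq'.2).symm
      obtain ⟨hPq, _, hq2, hqx⟩ := mem_Kset.mp hq.1
      obtain ⟨hPq', _, hq2', hqx'⟩ := mem_Kset.mp hq'.1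
      have hgeq : s(m, (C.tup q).u) ∈ C.F q.1 := by
        have := (tup_spec hPq).geF; rwa [hqx] at this
      have hgeq' : s(m, (C.tup q).u) ∈ C.F q'.1 := by
        have := (tup_spec hPq').geF; rwa [hqx', ← hu] at this
      exact F_cross_ne h1 hgeq hgeq' rfl
  have hUle := Finset.card_union_le ((C.Kset f₀ m).filter fun q => q.1 = p.1)
    ((C.Kset f₀ m).filter fun q => q.1 ≠ p.1)
  rw [← hsplit] at hUle
  constructor
  · omega
  · intro h2
    have hAne : 0 < ((C.Kset f₀ m).filter fun q => q.1 = p.1).card := by omega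
    obtain ⟨q₁, hq₁⟩ := Finset.card_pos.mp hAne
    simp only [Finset.mem_filter] at hq₁
    obtain ⟨hq₁K, hq₁1⟩ := hq₁
    obtain ⟨hPq₁, _, hq₁2, hq₁x⟩ := mem_Kset.mp hq₁K
    rw [Finset.card_eq_zero, Finset.eq_empty_iff_forall_notMem]
    intro r hr
    obtain ⟨hPr, _, hr2, hrx⟩ := mem_Kset.mp hr
    have hrp : r.1 = p.1 :=
      no_other_based hPp hnkp hPr (hr2.trans hfp.symm) (hrx.trans hyp.symm)
    have : r = q₁ := eq_of_fst_eq hr2 hq₁2 (hrp.trans hq₁1.symm)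
    rw [this] at hrx
    exact hsm (hrx.symm.trans hq₁x)

/-- two kept incidences at a slot kill the mate slot -/
lemma Kmate_of_two {f₀ : Sym2 V} {sv m : V} (hf₀R : f₀ ∈ C.R) (hf₀eq : f₀ = s(sv, m))
    (hsm : sv ≠ m) (h2 : 2 ≤ (C.Kset f₀ sv).card) : (C.Kset f₀ m).card = 0 := by
  have hsv : sv ∈ f₀ := by rw [hf₀eq]; simp
  have hm : m ∈ f₀ := by rw [hf₀eq]; simp
  obtain ⟨q₁, hq₁, q₂, hq₂, hq12⟩ := Finset.one_lt_card.mp h2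
  obtain ⟨hPq₁, _, hq₁2, hq₁x⟩ := mem_Kset.mp hq₁
  obtain ⟨hPq₂, _, hq₂2, hq₂x⟩ := mem_Kset.mp hq₂
  have h112 : q₁.1 ≠ q₂.1 := fun h => hq12 (eq_of_fst_eq hq₁2 hq₂2 h)
  have hge₁ : s(sv, (C.tup q₁).u) ∈ C.F q₁.1 := by
    have := (tup_spec hPq₁).geF; rwa [hq₁x] at this
  have hge₂ : s(sv, (C.tup q₂).u) ∈ C.F q₂.1 := by
    have := (tup_spec hPq₂).geF; rwa [hq₂x] at this
  have huu : (C.tup q₁).u ≠ (C.tup q₂).u := by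
    intro h
    exact F_cross_ne h112 hge₁ (h ▸ hge₂) rfl
  rw [Finset.card_eq_zero, Finset.eq_empty_iff_forall_notMem]
  intro r hr
  obtain ⟨hPr, _, hr2, hrx⟩ := mem_Kset.mp hr
  have hger : s(m, (C.tup r).u) ∈ C.F r.1 := by
    have := (tup_spec hPr).geF; rwa [hrx] at this
  have hr1 : ∀ (q : Fin C.n × Sym2 V), q ∈ C.Kset f₀ sv → r.1 ≠ q.1 := by
    intro q hq h
    obtain ⟨_, _, hq2, hqx⟩ := mem_Kset.mp hq
    have : r = q := eq_of_fst_eq hr2 hq2 h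
    rw [this] at hrx
    exact hsm (hqx.symm.trans hrx)
  have key : ∀ (q : Fin C.n × Sym2 V), q ∈ C.P → q.2 = f₀ → (C.tup q).x = sv →
      r.1 ≠ q.1 → (C.tup q).u = (C.tup r).u := by
    intro q hPq hq2 hqx hne
    have hgeq : s(sv, (C.tup q).u) ∈ C.F q.1 := by
      have := (tup_spec hPq).geF; rwa [hqx] at this
    have houtq : C.Out (C.tup q).u := (tup_spec hPq).outu
    have houtr : C.Out (C.tup r).u := (tup_spec hPr).outu
    by_contra hneu
    exact aug2 hf₀R (fun h => hne h.symm) (mem_P.mp hPq).2.1 (mem_P.mp hPr).2.1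
      hgeq hger
      (sdisj hsm (ne_of_out houtr hf₀R hsv) (Ne.symm (ne_of_out houtq hf₀R hm)) hneu)
      (smem (Or.inl hsv) (Or.inr houtq))
      (smem (Or.inl hm) (Or.inr houtr))
  have k1 := key q₁ hPq₁ hq₁2 hq₁x (hr1 q₁ hq₁)
  have k2 := key q₂ hPq₂ hq₂2 hq₂x (hr1 q₂ hq₂)
  exact huu (k1.trans k2.symm)

lemma Kset_le_three {f₀ : Sym2 V} {sv : V} : (C.Kset f₀ sv).card ≤ 3 := by
  rcases (C.Kset f₀ sv).eq_empty_or_nonempty with h | ⟨q, hq⟩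
  · simp [h]
  · obtain ⟨hPq, hk, hq2, hqx⟩ := mem_Kset.mp hq
    rw [Cfg.kept, hq2, hqx] at hk
    refine le_trans (Finset.card_le_card ?_) hk
    intro r hr
    obtain ⟨hPr, _, hr2, hrx⟩ := mem_Kset.mp hr
    exact mem_Phi.mpr ⟨hPr, hr2, hrx⟩

/-- **Per-edge bound**: at most 4 incidences are assigned to each edge of `R`. -/
lemma per_edge {f₀ : Sym2 V} (hf₀ : f₀ ∈ C.R) :
    (C.P.filter fun q => C.target q = f₀).card ≤ 4 := by
  classical
  obtain ⟨⟨sv, m⟩, hrep⟩ := f₀.exists_rep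
  have hf₀eq : f₀ = s(sv, m) := hrep.symm
  have hsm : sv ≠ m := fun h => R_nodiag hf₀ (by rw [hf₀eq, Sym2.mk_isDiag_iff]; exact h)
  have hf₀eq' : f₀ = s(m, sv) := by rw [hf₀eq, Sym2.eq_swap]
  have hsub : C.P.filter (fun q => C.target q = f₀) ⊆
      C.Kset f₀ sv ∪ C.Kset f₀ m ∪ C.Eset f₀ sv ∪ C.Eset f₀ m := by
    intro q hq
    obtain ⟨hqP, hqt⟩ := Finset.mem_filter.mp hq
    simp only [Finset.mem_union]
    by_cases hk : C.kept q
    · have hq2 : q.2 = f₀ := by rw [Cfg.target, if_pos hk] at hqt; exact hqt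
      have hx : (C.tup q).x ∈ f₀ := hq2 ▸ (tup_spec hqP).xe
      rw [hf₀eq, Sym2.mem_iff] at hx
      rcases hx with h | h
      · exact Or.inl (Or.inl (Or.inl (mem_Kset.mpr ⟨hqP, hk, hq2, h⟩)))
      · exact Or.inl (Or.inl (Or.inr (mem_Kset.mpr ⟨hqP, hk, hq2, h⟩)))
    · have hqf : (C.tup q).f = f₀ := by rw [Cfg.target, if_neg hk] at hqt; exact hqt
      have hy : (C.tup q).y ∈ f₀ := hqf ▸ (tup_spec hqP).yf
      rw [hf₀eq, Sym2.mem_iff] at hy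
      rcases hy with h | h
      · exact Or.inl (Or.inr (mem_Eset.mpr ⟨hqP, hk, hqf, h⟩))
      · exact Or.inr (mem_Eset.mpr ⟨hqP, hk, hqf, h⟩)
  have htot : (C.P.filter fun q => C.target q = f₀).card ≤
      (C.Kset f₀ sv).card + (C.Kset f₀ m).card + (C.Eset f₀ sv).card +
        (C.Eset f₀ m).card := by
    refine le_trans (Finset.card_le_card hsub) ?_
    calc (C.Kset f₀ sv ∪ C.Kset f₀ m ∪ C.Eset f₀ sv ∪ C.Eset f₀ m).card
        ≤ (C.Kset f₀ sv ∪ C.Kset f₀ m ∪ C.Eset f₀ sv).card + (C.Eset f₀ m).card :=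
          Finset.card_union_le _ _
      _ ≤ (C.Kset f₀ sv ∪ C.Kset f₀ m).card + (C.Eset f₀ sv).card + (C.Eset f₀ m).card :=
          by have := Finset.card_union_le (C.Kset f₀ sv ∪ C.Kset f₀ m) (C.Eset f₀ sv); omega
      _ ≤ _ := by have := Finset.card_union_le (C.Kset f₀ sv) (C.Kset f₀ m); omega
  have hE1 : (C.Eset f₀ sv).card ≤ 1 := Eset_card hf₀ hf₀eq hsm
  have hE2 : (C.Eset f₀ m).card ≤ 1 := Eset_card hf₀ hf₀eq' (Ne.symm hsm)
  have hK3 : (C.Kset f₀ sv).card ≤ 3 := Kset_le_three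
  have hK3' : (C.Kset f₀ m).card ≤ 3 := Kset_le_three
  rcases (C.Eset f₀ sv).eq_empty_or_nonempty with hE1e | ⟨p₁, hp₁⟩ <;>
    rcases (C.Eset f₀ m).eq_empty_or_nonempty with hE2e | ⟨p₂, hp₂⟩
  · -- no exporters
    have hz1 : (C.Eset f₀ sv).card = 0 := by rw [hE1e]; exact Finset.card_empty
    have hz2 : (C.Eset f₀ m).card = 0 := by rw [hE2e]; exact Finset.card_empty
    by_cases h1 : 2 ≤ (C.Kset f₀ sv).card
    · have := Kmate_of_two hf₀ hf₀eq hsm h1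
      omega
    · by_cases h2 : 2 ≤ (C.Kset f₀ m).card
      · have := Kmate_of_two hf₀ hf₀eq' (Ne.symm hsm) h2
        omega
      · omega
  · -- exporter into m only
    have hz1 : (C.Eset f₀ sv).card = 0 := by rw [hE1e]; exact Finset.card_empty
    have hK1le : (C.Kset f₀ m).card ≤ 1 := Kset_le_one_of_Eset hp₂
    obtain ⟨hK2le, himp⟩ := Kmate_of_E hf₀ hf₀eq' (Ne.symm hsm) hp₂
    by_cases h2 : (C.Kset f₀ sv).card = 2
    · have := himp h2
      omega
    · omega
  · -- exporter into sv only
    have hz2 : (C.Eset f₀ m).card = 0 := by rw [hE2e]; exact Finset.card_empty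
    have hK1le : (C.Kset f₀ sv).card ≤ 1 := Kset_le_one_of_Eset hp₁
    obtain ⟨hK2le, himp⟩ := Kmate_of_E hf₀ hf₀eq hsm hp₁
    by_cases h2 : (C.Kset f₀ m).card = 2
    · have := himp h2
      omega
    · omega
  · -- both exporters
    have hK1le : (C.Kset f₀ sv).card ≤ 1 := Kset_le_one_of_Eset hp₁
    have hK2le : (C.Kset f₀ m).card ≤ 1 := Kset_le_one_of_Eset hp₂
    omega

end Bounds

section Main

lemma hwDeg_eq_fiber {e : Sym2 V} (he : e ∈ C.R) :
    hwDeg C.F C.I C.R e = (C.P.filter fun q => q.2 = e).card := by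
  classical
  rw [hwDeg]
  have hset : {i : Fin C.n | i ∉ C.I ∧ HalfWasteful C.R (C.F i) e} =
      ↑(Finset.univ.filter fun i => i ∉ C.I ∧ HalfWasteful C.R (C.F i) e) := by
    ext i; simp
  rw [hset, Set.ncard_coe_finset]
  refine Finset.card_bij' (fun i _ => (i, e)) (fun q _ => q.1) ?_ ?_ ?_ ?_
  · intro i hi
    simp only [Finset.mem_filter, Finset.mem_univ, true_and] at hi
    exact Finset.mem_filter.mpr ⟨mem_P.mpr ⟨he, hi.1, hi.2⟩, rfl⟩
  · intro q hq
    simp only [Finset.mem_filter] at hq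
    obtain ⟨hqP, hq2⟩ := hq
    obtain ⟨_, h1, h2⟩ := mem_P.mp hqP
    simp only [Finset.mem_filter, Finset.mem_univ, true_and]
    rw [← hq2]
    exact ⟨h1, h2⟩
  · intro i _; rfl
  · intro q hq
    simp only [Finset.mem_filter] at hq
    exact Prod.ext rfl hq.2.symm

/-- **Main bound**, bundled form. -/
lemma main_bound : ∑ e ∈ C.R, hwDeg C.F C.I C.R e ≤ 4 * C.I.card := by
  classical
  rw [Finset.sum_congr rfl (fun e he => hwDeg_eq_fiber he)]
  rw [← Finset.card_eq_sum_card_fiberwise (fun q hq => (mem_P.mp hq).1)]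
  rw [Finset.card_eq_sum_card_fiberwise (fun q hq => target_mem_R (C := C) hq)]
  calc ∑ f₀ ∈ C.R, (C.P.filter fun q => C.target q = f₀).card
      ≤ ∑ _f₀ ∈ C.R, 4 := Finset.sum_le_sum fun f₀ h => per_edge h
    _ = 4 * C.R.card := by rw [Finset.sum_const, smul_eq_mul, mul_comm]
    _ ≤ 4 * C.I.card := Nat.mul_le_mul_left 4 (Finset.card_image_le)

end Main

end Cfg
end AKZ

/-- Let `F₁, …, Fₙ` be pairwise disjoint matchings of size `n` in a
graph, and `R = I.image c` a maximum-size rainbow matching of size `q = |I|`. Then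
`Σ_{e ∈ R} |HW(e)| ≤ 4q`, where `HW(e)` is the set of unrepresented matchings `Fᵢ` for
which `e` is half-`Fᵢ`-wasteful. -/
theorem stmt_17 {V : Type*} [DecidableEq V] (G : SimpleGraph V) (n : ℕ)
    (F : Fin n → Finset (Sym2 V))
    (hedges : ∀ i, ∀ e ∈ F i, e ∈ G.edgeSet)
    (hmatch : ∀ i, ∀ e ∈ F i, ∀ f ∈ F i, e ≠ f → ∀ v, v ∈ e → v ∉ f)
    (hsize : ∀ i, (F i).card = n)
    (hdisjF : ∀ i j, i ≠ j → Disjoint (F i) (F j))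
    (I : Finset (Fin n)) (c : Fin n → Sym2 V)
    (hc : ∀ i ∈ I, c i ∈ F i)
    (hdisj : ∀ i ∈ I, ∀ j ∈ I, i ≠ j → ∀ v, v ∈ c i → v ∉ c j)
    (hmax : ∀ (J : Finset (Fin n)) (d : Fin n → Sym2 V),
      (∀ i ∈ J, d i ∈ F i) →
      (∀ i ∈ J, ∀ j ∈ J, i ≠ j → ∀ v, v ∈ d i → v ∉ d j) →
      J.card ≤ I.card) :
    ∑ e ∈ I.image c, hwDeg F I (I.image c) e ≤ 4 * I.card := by
  classical
  rcases Nat.eq_zero_or_pos n with rfl | hn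
  · have hI : I = ∅ := Finset.eq_empty_of_isEmpty I
    subst hI
    simp
  · have nv : Nonempty V := by
      obtain ⟨⟨a, b⟩, _⟩ := (c ⟨0, hn⟩).exists_rep
      exact ⟨a⟩
    exact Cfg.main_bound (C := ⟨n, G, F, I, c, nv, hedges, hmatch, hdisjF, hc, hdisj, hmax⟩)
end

section
/- Let G be a graph with no cycle of length 3 and no cycle of length 5, let F_1, …, F_n be matchings of size n in G, and let q be the maximum size of a rainbow matching. Then (3n − 4q)(n − q) ≤ 3q. -/
section helpers
variable {V : Type*}

lemma sym2_eq_mk_out (e : Sym2 V) : e = s(e.out.1, e.out.2) := by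
  conv_lhs => rw [← e.out_eq]

lemma sym2_mem_out_iff {e : Sym2 V} {v : V} :
    v ∈ e ↔ v = e.out.1 ∨ v = e.out.2 := by
  conv_lhs => rw [sym2_eq_mk_out e]
  exact Sym2.mem_iff

lemma sym2_eq_of_two_mem {e : Sym2 V} {u v : V} (hu : u ∈ e) (hv : v ∈ e)
    (huv : u ≠ v) : e = s(u, v) := by
  rw [sym2_mem_out_iff] at hu hv
  rw [sym2_eq_mk_out e]
  rcases hu with rfl | rfl <;> rcases hv with rfl | rfl <;> first
    | exact absurd rfl huv
    | rfl
    | exact Sym2.eq_swap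

lemma cyc3 {V : Type*} (G : SimpleGraph V)
    (hfree : ∀ (v : V) (w : G.Walk v v), w.IsCycle → w.length ≠ 3 ∧ w.length ≠ 5)
    {u v x : V} (h1 : G.Adj u v) (h2 : G.Adj v x) (h3 : G.Adj x u) : False := by
  have n1 : u ≠ v := h1.ne
  have n2 : v ≠ x := h2.ne
  have n3 : x ≠ u := h3.ne
  let w : G.Walk u u := .cons h1 (.cons h2 (.cons h3 .nil))
  have hcyc : w.IsCycle := by
    rw [SimpleGraph.Walk.isCycle_def, SimpleGraph.Walk.isTrail_def]
    refine ⟨?_, by simp [w], ?_⟩ <;>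
      simp [w, Sym2.eq_iff, n1, n2, n3, n1.symm, n2.symm, n3.symm]
  exact (hfree u w hcyc).1 (by simp [w, SimpleGraph.Walk.length_cons])

lemma cyc5 {V : Type*} (G : SimpleGraph V)
    (hfree : ∀ (v : V) (w : G.Walk v v), w.IsCycle → w.length ≠ 3 ∧ w.length ≠ 5)
    {a b c d e : V} (h1 : G.Adj a b) (h2 : G.Adj b c) (h3 : G.Adj c d) (h4 : G.Adj d e)
    (h5 : G.Adj e a) (hac : a ≠ c) (had : a ≠ d) (hbd : b ≠ d) (hbe : b ≠ e) (hce : c ≠ e) :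
    False := by
  have n1 : a ≠ b := h1.ne
  have n2 : b ≠ c := h2.ne
  have n3 : c ≠ d := h3.ne
  have n4 : d ≠ e := h4.ne
  have n5 : e ≠ a := h5.ne
  let w : G.Walk a a := .cons h1 (.cons h2 (.cons h3 (.cons h4 (.cons h5 .nil))))
  have hcyc : w.IsCycle := by
    rw [SimpleGraph.Walk.isCycle_def, SimpleGraph.Walk.isTrail_def]
    refine ⟨?_, by simp [w], ?_⟩ <;>
      simp [w, Sym2.eq_iff, n1, n2, n3, n4, n5, n1.symm, n2.symm, n3.symm, n4.symm, n5.symm,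
        hac, had, hbd, hbe, hce, hac.symm, had.symm, hbd.symm, hbe.symm, hce.symm]
  exact (hfree a w hcyc).2 (by simp [w, SimpleGraph.Walk.length_cons])

end helpers

/-- Let `G` be a graph with no 3-cycle and no 5-cycle, let
`F₁, …, Fₙ` be matchings of size `n` in `G`, and let `q = |I|` be the maximum size of a
rainbow matching. Then `(3n - 4q)(n - q) ≤ 3q`. -/
theorem stmt_18 {V : Type*} [DecidableEq V] (G : SimpleGraph V) (n : ℕ)
    (hfree : ∀ (v : V) (w : G.Walk v v), w.IsCycle → w.length ≠ 3 ∧ w.length ≠ 5)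
    (F : Fin n → Finset (Sym2 V))
    (hedges : ∀ i, ∀ e ∈ F i, e ∈ G.edgeSet)
    (hmatch : ∀ i, ∀ e ∈ F i, ∀ f ∈ F i, e ≠ f → ∀ v, v ∈ e → v ∉ f)
    (hsize : ∀ i, (F i).card = n)
    (I : Finset (Fin n)) (c : Fin n → Sym2 V)
    (hc : ∀ i ∈ I, c i ∈ F i)
    (hdisj : ∀ i ∈ I, ∀ j ∈ I, i ≠ j → ∀ v, v ∈ c i → v ∉ c j)
    (hmax : ∀ (J : Finset (Fin n)) (d : Fin n → Sym2 V),
      (∀ i ∈ J, d i ∈ F i) →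
      (∀ i ∈ J, ∀ j ∈ J, i ≠ j → ∀ v, v ∈ d i → v ∉ d j) →
      J.card ≤ I.card) :
    (3 * (n : ℝ) - 4 * (I.card : ℝ)) * ((n : ℝ) - (I.card : ℝ)) ≤ 3 * (I.card : ℝ) := by
  classical
  have hqn : I.card ≤ n := by simpa using Finset.card_le_univ I
  suffices hMain : 3 * (n - I.card) * (n - I.card) ≤ I.card * (n - I.card) + 3 * I.card by
    have hsplit : (n : ℝ) = (I.card : ℝ) + ((n - I.card : ℕ) : ℝ) := by
      have := Nat.cast_sub (R := ℝ) hqn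
      linarith [this]
    have h' : (3 : ℝ) * ((n - I.card : ℕ) : ℝ) * ((n - I.card : ℕ) : ℝ) ≤
        (I.card : ℝ) * ((n - I.card : ℕ) : ℝ) + 3 * (I.card : ℝ) := by exact_mod_cast hMain
    nlinarith [h', hsplit]
  by_cases hk0 : n - I.card = 0
  · simp [hk0]
  · set K : Finset (Fin n) := Finset.univ \ I with hKdef
    have hKcard : K.card = n - I.card := by
      rw [hKdef, Finset.card_sdiff_of_subset (Finset.subset_univ I)]; simp
    have hKI : ∀ i ∈ K, i ∉ I := fun i hi => (Finset.mem_sdiff.mp hi).2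
    obtain ⟨i0, hi0⟩ : K.Nonempty := by rw [← Finset.card_pos, hKcard]; omega
    have hn1 : 1 ≤ n := by omega
    obtain ⟨e0, he0⟩ : (F i0).Nonempty := by rw [← Finset.card_pos, hsize]; omega
    haveI : Nonempty V := ⟨e0.out.1⟩
    -- vertex set of the rainbow matching
    set Vs : Finset V := I.biUnion (fun m => {(c m).out.1, (c m).out.2}) with hVsdef
    have hVs : ∀ v : V, v ∈ Vs ↔ ∃ m ∈ I, v ∈ c m := by
      intro v
      rw [hVsdef]; simp only [Finset.mem_biUnion, Finset.mem_insert, Finset.mem_singleton]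
      constructor
      · rintro ⟨m, hm, h⟩; exact ⟨m, hm, sym2_mem_out_iff.mpr h⟩
      · rintro ⟨m, hm, h⟩; exact ⟨m, hm, sym2_mem_out_iff.mp h⟩
    have hnd : ∀ i, ∀ e ∈ F i, ¬ e.IsDiag := fun i e he => G.not_isDiag_of_mem_edgeSet (hedges i e he)
    have hout_ne : ∀ i, ∀ e ∈ F i, e.out.1 ≠ e.out.2 := by
      intro i e he h
      exact hnd i e he (by rw [sym2_eq_mk_out e]; exact Sym2.mk_isDiag_iff.mpr h)
    have hAdj : ∀ i, ∀ e ∈ F i, ∀ u v : V, u ∈ e → v ∈ e → u ≠ v → G.Adj u v := by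
      intro i e he u v hu hv huv
      have h1 : e ∈ G.edgeSet := hedges i e he
      rw [sym2_eq_of_two_mem hu hv huv] at h1
      exact h1
    have hVsdisj : ∀ x ∈ I, ∀ y ∈ I, x ≠ y →
        Disjoint ({(c x).out.1, (c x).out.2} : Finset V) {(c y).out.1, (c y).out.2} := by
      intro x hx y hy hxy
      rw [Finset.disjoint_left]
      intro a ha hb
      simp only [Finset.mem_insert, Finset.mem_singleton] at ha hb
      exact hdisj x hx y hy hxy a (sym2_mem_out_iff.mpr ha) (sym2_mem_out_iff.mpr hb)
    have hVscard : Vs.card = 2 * I.card := by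
      rw [hVsdef, Finset.card_biUnion hVsdisj]
      rw [Finset.sum_congr rfl (fun m hm => Finset.card_pair (hout_ne m (c m) (hc m hm)))]
      simp [mul_comm]
    -- the part of an edge inside Vs
    set Se : Sym2 V → Finset V := fun e => ({e.out.1, e.out.2} : Finset V) ∩ Vs with hSedef
    have hSemem : ∀ e (v : V), v ∈ Se e ↔ v ∈ e ∧ v ∈ Vs := by
      intro e v
      rw [hSedef]
      simp only [Finset.mem_inter, Finset.mem_insert, Finset.mem_singleton]
      rw [← sym2_mem_out_iff]
    have hSecard : ∀ e, (Se e).card ≤ 2 := by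
      intro e
      calc (Se e).card ≤ ({e.out.1, e.out.2} : Finset V).card :=
            Finset.card_le_card (Finset.inter_subset_left)
      _ ≤ 2 := (Finset.card_insert_le _ _).trans (by simp)
    have hSedisj : ∀ i, ∀ x ∈ F i, ∀ y ∈ F i, x ≠ y → Disjoint (Se x) (Se y) := by
      intro i x hx y hy hxy
      rw [Finset.disjoint_left]
      intro a ha hb
      exact hmatch i x hx y hy hxy a ((hSemem x a).mp ha).1 ((hSemem y a).mp hb).1
    -- augmentation principle
    have aug : ∀ (M N : Finset (Fin n)) (d : Fin n → Sym2 V), M ⊆ I → (∀ i ∈ N, i ∉ I) →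
        (∀ i ∈ N, d i ∈ F i) →
        (∀ i ∈ N, ∀ j ∈ N, i ≠ j → ∀ v, v ∈ d i → v ∉ d j) →
        (∀ i ∈ N, ∀ j ∈ I, j ∉ M → ∀ v, v ∈ d i → v ∉ c j) →
        M.card < N.card → False := by
      intro M N d hM hNI hd1 hd2 hd3 hcard
      set J : Finset (Fin n) := (I \ M) ∪ N with hJ
      set d' : Fin n → Sym2 V := fun i => if i ∈ N then d i else c i with hd'
      have hmem : ∀ i ∈ J, (i ∈ N) ∨ (i ∈ I ∧ i ∉ M ∧ i ∉ N) := by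
        intro i hi
        rcases Finset.mem_union.mp hi with h | h
        · by_cases hiN : i ∈ N
          · exact Or.inl hiN
          · exact Or.inr ⟨(Finset.mem_sdiff.mp h).1, (Finset.mem_sdiff.mp h).2, hiN⟩
        · exact Or.inl h
      have h1 : ∀ i ∈ J, d' i ∈ F i := by
        intro i hi
        rcases hmem i hi with h | ⟨hI, _, hN⟩
        · simp only [hd', if_pos h]; exact hd1 i h
        · simp only [hd', if_neg hN]; exact hc i hI
      have h2 : ∀ i ∈ J, ∀ j ∈ J, i ≠ j → ∀ v, v ∈ d' i → v ∉ d' j := by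
        intro i hi j hj hij v hvi hvj
        rcases hmem i hi with hiN | ⟨hiI, hiM, hiN⟩ <;> rcases hmem j hj with hjN | ⟨hjI, hjM, hjN⟩
        · simp only [hd', if_pos hiN, if_pos hjN] at hvi hvj
          exact hd2 i hiN j hjN hij v hvi hvj
        · simp only [hd', if_pos hiN, if_neg hjN] at hvi hvj
          exact hd3 i hiN j hjI hjM v hvi hvj
        · simp only [hd', if_neg hiN, if_pos hjN] at hvi hvj
          exact hd3 j hjN i hiI hiM v hvj hvi
        · simp only [hd', if_neg hiN, if_neg hjN] at hvi hvj
          exact hdisj i hiI j hjI hij v hvi hvj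
      have hdisjJ : Disjoint (I \ M) N := by
        refine Finset.disjoint_left.mpr ?_
        intro a ha haN
        exact hNI a haN (Finset.mem_sdiff.mp ha).1
      have hcardJ : J.card = I.card - M.card + N.card := by
        rw [hJ, Finset.card_union_of_disjoint hdisjJ, Finset.card_sdiff_of_subset hM]
      have hMI : M.card ≤ I.card := Finset.card_le_card hM
      have := hmax J d' h1 h2
      omega
    -- every unused edge meets Vs
    have hmeet : ∀ i ∈ K, ∀ e ∈ F i, ∃ v, v ∈ e ∧ v ∈ Vs := by
      intro i hi e he
      by_contra hcon
      push_neg at hcon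
      refine aug ∅ {i} (fun _ => e) (Finset.empty_subset I) ?_ ?_ ?_ ?_ (by simp)
      · intro t ht; rw [Finset.mem_singleton] at ht; rw [ht]; exact hKI i hi
      · intro t ht; rw [Finset.mem_singleton] at ht; rw [ht]; exact he
      · intro a ha b hb hab
        rw [Finset.mem_singleton] at ha hb; rw [ha, hb] at hab; exact absurd rfl hab
      · intro t ht j hj _ v hv hvc
        exact hcon v hv ((hVs v).mpr ⟨j, hj, hvc⟩)
    have hSe1 : ∀ i ∈ K, ∀ e ∈ F i, 1 ≤ (Se e).card := by
      intro i hi e he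
      obtain ⟨v, hv, hvVs⟩ := hmeet i hi e he
      exact Finset.card_pos.mpr ⟨v, (hSemem e v).mpr ⟨hv, hvVs⟩⟩
    -- edge classification
    set E1 : Fin n → Finset (Sym2 V) := fun i => (F i).filter (fun e => (Se e).card = 1) with hE1def
    set E2 : Fin n → Finset (Sym2 V) := fun i => (F i).filter (fun e => (Se e).card = 2) with hE2def
    have hf1 : ∀ i ∈ K, (E1 i).card + (E2 i).card = n := by
      intro i hi
      have hpart := Finset.card_filter_add_card_filter_not
        (s := F i) (p := fun e => (Se e).card = 1)
      have heq : (F i).filter (fun e => ¬ (Se e).card = 1) = (F i).filter (fun e => (Se e).card = 2) := by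
        apply Finset.filter_congr
        intro e he
        have h1 := hSe1 i hi e he
        have h2 := hSecard e
        constructor
        · intro h; omega
        · intro h; simp only [h]; omega
      rw [heq] at hpart
      rw [hsize i] at hpart
      rw [hE1def, hE2def]
      exact hpart
    have hsumSe : ∀ i ∈ K, (∑ e ∈ F i, (Se e).card) = (E1 i).card + 2 * (E2 i).card := by
      intro i hi
      rw [← Finset.sum_filter_add_sum_filter_not (F i) (fun e => (Se e).card = 1)]
      have hA : ∑ e ∈ (F i).filter (fun e => (Se e).card = 1), (Se e).card
          = (E1 i).card := by
        rw [Finset.sum_congr rfl (fun e he => (Finset.mem_filter.mp he).2)]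
        simp [hE1def]
      have hB : ∑ e ∈ (F i).filter (fun e => ¬ (Se e).card = 1), (Se e).card
          = 2 * (E2 i).card := by
        have heq : (F i).filter (fun e => ¬ (Se e).card = 1)
            = (F i).filter (fun e => (Se e).card = 2) := by
          apply Finset.filter_congr
          intro e he
          have h1 := hSe1 i hi e he
          have h2 := hSecard e
          constructor
          · intro h; omega
          · intro h; simp only [h]; omega
        rw [heq]
        rw [Finset.sum_congr rfl (fun e he => (Finset.mem_filter.mp he).2)]
        simp [hE2def, mul_comm]
      omega
    have hsum_le : ∀ i ∈ K, (∑ e ∈ F i, (Se e).card) ≤ 2 * I.card := by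
      intro i hi
      rw [← Finset.card_biUnion (hSedisj i)]
      calc ((F i).biUnion Se).card ≤ Vs.card := by
            apply Finset.card_le_card
            intro v hv
            obtain ⟨e, _, hv⟩ := Finset.mem_biUnion.mp hv
            exact ((hSemem e v).mp hv).2
      _ = 2 * I.card := hVscard
    have hb2k : ∀ i ∈ K, 2 * (n - I.card) ≤ (E1 i).card := by
      intro i hi
      have := hf1 i hi
      have := hsumSe i hi
      have := hsum_le i hi
      omega
    -- other-endpoint extraction
    have hext : ∀ i, ∀ e ∈ F i, ∀ u, u ∈ e → ∃ x, x ∈ e ∧ x ≠ u ∧ e = s(u, x) := by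
      intro i e he u hu
      refine ⟨Sym2.Mem.other' hu, Sym2.other_mem' hu, ?_, (Sym2.other_spec' hu).symm⟩
      intro h
      apply hnd i e he
      rw [← Sym2.other_spec' hu, h]
      exact Sym2.mk_isDiag_iff.mpr rfl
    -- external touches
    set touch : Fin n → V → Prop :=
      fun i v => ∃ e ∈ F i, v ∈ e ∧ ∀ w ∈ e, w ≠ v → w ∉ Vs with htouchdef
    -- Claim A
    have hA : ∀ m ∈ I, ∀ u, u ∈ c m → ∀ v, v ∈ c m → u ≠ v → ∀ i ∈ K, ∀ j ∈ K, i ≠ j →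
        touch i u → touch j v → False := by
      intro m hm u hu v hv huv i hiK j hjK hij hti htj
      obtain ⟨ei, heiF, huei, hexti⟩ := hti
      obtain ⟨ej, hejF, hvej, hextj⟩ := htj
      obtain ⟨x, hxei, hxu, heix⟩ := hext i ei heiF u huei
      obtain ⟨y, hyej, hyv, hejy⟩ := hext j ej hejF v hvej
      have hxVs : x ∉ Vs := hexti x hxei hxu
      have hyVs : y ∉ Vs := hextj y hyej hyv
      have huVs : u ∈ Vs := (hVs u).mpr ⟨m, hm, hu⟩
      have hvVs : v ∈ Vs := (hVs v).mpr ⟨m, hm, hv⟩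
      have hei_mem : ∀ w, w ∈ ei → w = u ∨ w = x := by
        intro w hw; rw [heix] at hw; exact Sym2.mem_iff.mp hw
      have hej_mem : ∀ w, w ∈ ej → w = v ∨ w = y := by
        intro w hw; rw [hejy] at hw; exact Sym2.mem_iff.mp hw
      by_cases hxy : x = y
      · have h1 : G.Adj u v := hAdj m (c m) (hc m hm) u v hu hv huv
        have h2 : G.Adj v x := hAdj j ej hejF v x hvej (hxy ▸ hyej)
          (fun h => hxVs (h ▸ hvVs))
        have h3 : G.Adj x u := (hAdj i ei heiF u x huei hxei (Ne.symm hxu)).symm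
        exact cyc3 G hfree h1 h2 h3
      · have hmem_contra : ∀ w, w ∈ ei → w ∈ ej → False := by
          intro w hwa hwb
          rcases hei_mem w hwa with h3 | h3 <;> rcases hej_mem w hwb with h4 | h4
          · exact huv (h3.symm.trans h4)
          · exact hyVs (by rw [← h4, h3]; exact huVs)
          · exact hxVs (by rw [← h3, h4]; exact hvVs)
          · exact hxy (h3.symm.trans h4)
        refine aug {m} {i, j} (fun t => if t = i then ei else ej) ?_ ?_ ?_ ?_ ?_ ?_
        · intro t ht; rw [Finset.mem_singleton] at ht; rw [ht]; exact hm
        · intro t ht; rcases Finset.mem_insert.mp ht with h | h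
          · rw [h]; exact hKI i hiK
          · rw [Finset.mem_singleton.mp h]; exact hKI j hjK
        · intro t ht; rcases Finset.mem_insert.mp ht with h | h
          · rw [h]; rw [if_pos rfl]; exact heiF
          · rw [Finset.mem_singleton.mp h]; rw [if_neg (Ne.symm hij)]; exact hejF
        · intro a ha b hb hab w hwa hwb
          rcases Finset.mem_insert.mp ha with h1 | h1 <;>
            rcases Finset.mem_insert.mp hb with h2 | h2
          · rw [h1, h2] at hab; exact absurd rfl hab
          · rw [h1, if_pos rfl] at hwa
            rw [Finset.mem_singleton.mp h2, if_neg (Ne.symm hij)] at hwb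
            exact hmem_contra w hwa hwb
          · rw [Finset.mem_singleton.mp h1, if_neg (Ne.symm hij)] at hwa
            rw [h2, if_pos rfl] at hwb
            exact hmem_contra w hwb hwa
          · rw [Finset.mem_singleton.mp h1, Finset.mem_singleton.mp h2] at hab
            exact absurd rfl hab
        · intro t ht j' hj' hj'm w hw hwc
          have hj'ne : j' ≠ m := fun h => hj'm (Finset.mem_singleton.mpr h)
          have hwVs : w ∈ Vs := (hVs w).mpr ⟨j', hj', hwc⟩
          rcases Finset.mem_insert.mp ht with h | h
          · rw [h, if_pos rfl] at hw
            rcases hei_mem w hw with h3 | h3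
            · exact hdisj m hm j' hj' (Ne.symm hj'ne) u hu (h3 ▸ hwc)
            · exact hxVs (h3 ▸ hwVs)
          · rw [Finset.mem_singleton.mp h, if_neg (Ne.symm hij)] at hw
            rcases hej_mem w hw with h3 | h3
            · exact hdisj m hm j' hj' (Ne.symm hj'ne) v hv (h3 ▸ hwc)
            · exact hyVs (h3 ▸ hwVs)
        · rw [Finset.card_singleton, Finset.card_insert_of_notMem (by simp [hij]),
            Finset.card_singleton]
          omega
    set tau : V → ℕ := fun v => (K.filter (fun i => touch i v)).card with htaudef
    have htau_le : ∀ v, tau v ≤ n - I.card := by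
      intro v
      rw [htaudef]
      calc (K.filter (fun i => touch i v)).card ≤ K.card :=
        Finset.card_le_card (Finset.filter_subset _ _)
      _ = n - I.card := hKcard
    have htau2 : ∀ m ∈ I, ∀ u, u ∈ c m → ∀ v, v ∈ c m → u ≠ v → 2 ≤ tau u → tau v = 0 := by
      intro m hm u hu v hv huv h2
      by_contra hne0
      have h1 : 1 ≤ tau v := Nat.one_le_iff_ne_zero.mpr hne0
      simp only [htaudef] at h1 h2
      obtain ⟨j, hjmem⟩ := Finset.card_pos.mp (by omega : 0 < (K.filter (fun i => touch i v)).card)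
      obtain ⟨i, himem, hine⟩ := Finset.exists_mem_ne
        (by omega : 1 < (K.filter (fun i => touch i u)).card) j
      have hjK := (Finset.mem_filter.mp hjmem).1
      have hjt := (Finset.mem_filter.mp hjmem).2
      have hiK := (Finset.mem_filter.mp himem).1
      have hit := (Finset.mem_filter.mp himem).2
      exact hA m hm u hu v hv huv i hiK j hjK hine hit hjt
    -- total number of touches
    set B : ℕ := ∑ v ∈ Vs, tau v with hBdef
    have hswapB : B = ∑ i ∈ K, (Vs.filter (fun v => touch i v)).card := by
      rw [hBdef]
      rw [Finset.sum_congr rfl (fun v _ => Finset.card_filter (fun i => touch i v) K)]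
      rw [Finset.sum_comm]
      exact Finset.sum_congr rfl (fun i _ => (Finset.card_filter _ _).symm)
    have hperB : ∀ i ∈ K, (E1 i).card ≤ (Vs.filter (fun v => touch i v)).card := by
      intro i hi
      set f : Sym2 V → V := fun e => if h : (Se e).Nonempty then h.choose else e0.out.1 with hfdef
      apply Finset.card_le_card_of_injOn f
      · intro e he
        rw [hE1def] at he
        obtain ⟨heF, hcard1⟩ := Finset.mem_filter.mp he
        have hne : (Se e).Nonempty := Finset.card_pos.mp (by omega)
        have hfe : f e ∈ Se e := by
          rw [hfdef]; dsimp only; rw [dif_pos hne]; exact hne.choose_spec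
        obtain ⟨hfee, hfeVs⟩ := (hSemem e (f e)).mp hfe
        refine Finset.mem_filter.mpr ⟨hfeVs, ⟨e, heF, hfee, ?_⟩⟩
        intro w hw hwne hwVs
        exact hwne (Finset.card_le_one.mp (le_of_eq hcard1) w
          ((hSemem e w).mpr ⟨hw, hwVs⟩) (f e) hfe)
      · intro e he e' he' hfeq
        by_contra hne
        rw [hE1def] at he he'
        simp only [Finset.coe_filter, Set.mem_setOf_eq] at he he'
        have hne1 : (Se e).Nonempty := Finset.card_pos.mp (by omega)
        have hne2 : (Se e').Nonempty := Finset.card_pos.mp (by omega)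
        have hfe : f e ∈ Se e := by
          rw [hfdef]; dsimp only; rw [dif_pos hne1]; exact hne1.choose_spec
        have hfe' : f e' ∈ Se e' := by
          rw [hfdef]; dsimp only; rw [dif_pos hne2]; exact hne2.choose_spec
        rw [← hfeq] at hfe'
        exact hmatch i e he.1 e' he'.1 hne (f e) ((hSemem e (f e)).mp hfe).1
          ((hSemem e' (f e)).mp hfe').1
    have hBlow : 2 * (n - I.card) * (n - I.card) ≤ B := by
      have hper : ∀ i ∈ K, 2 * (n - I.card) ≤ (Vs.filter (fun v => touch i v)).card :=
        fun i hi => le_trans (hb2k i hi) (hperB i hi)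
      calc 2 * (n - I.card) * (n - I.card) = K.card * (2 * (n - I.card)) := by
            rw [hKcard]; ring
      _ ≤ ∑ i ∈ K, (Vs.filter (fun v => touch i v)).card := by
            simpa using Finset.card_nsmul_le_sum K _ _ hper
      _ = B := hswapB.symm
    -- strong edges
    set strongp : Fin n → Prop := fun m => ∃ u, u ∈ c m ∧ 3 ≤ tau u with hstrongdef
    set SE : Finset (Fin n) := I.filter strongp with hSEdef
    set p : ℕ := SE.card with hpdef
    have hpq : p ≤ I.card := by
      rw [hpdef, hSEdef]; exact Finset.card_le_card (Finset.filter_subset _ _)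
    have hedgesum : B = ∑ m ∈ I, ∑ v ∈ ({(c m).out.1, (c m).out.2} : Finset V), tau v := by
      rw [hBdef, hVsdef]
      exact Finset.sum_biUnion (fun a ha b hb hab =>
        hVsdisj a (Finset.mem_coe.mp ha) b (Finset.mem_coe.mp hb) hab)
    have hperedge : ∀ m ∈ I, (∑ v ∈ ({(c m).out.1, (c m).out.2} : Finset V), tau v)
        ≤ if strongp m then (n - I.card) else 2 := by
      intro m hm
      have ho := hout_ne m (c m) (hc m hm)
      rw [Finset.sum_pair ho]
      have hu1 : (c m).out.1 ∈ c m := Sym2.out_fst_mem (c m)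
      have hu2 : (c m).out.2 ∈ c m := Sym2.out_snd_mem (c m)
      by_cases hs : strongp m
      · rw [if_pos hs]
        simp only [hstrongdef] at hs
        obtain ⟨u, huc, hu3⟩ := hs
        rcases sym2_mem_out_iff.mp huc with h | h
        · have h0 : tau (c m).out.2 = 0 :=
            htau2 m hm (c m).out.1 hu1 (c m).out.2 hu2 ho (by rw [← h]; omega)
          have := htau_le (c m).out.1
          omega
        · have h0 : tau (c m).out.1 = 0 :=
            htau2 m hm (c m).out.2 hu2 (c m).out.1 hu1 (Ne.symm ho) (by rw [← h]; omega)
          have := htau_le (c m).out.2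
          omega
      · rw [if_neg hs]
        simp only [hstrongdef] at hs
        push_neg at hs
        have hb1 : tau (c m).out.1 ≤ 2 := by have := hs (c m).out.1 hu1; omega
        have hb2 : tau (c m).out.2 ≤ 2 := by have := hs (c m).out.2 hu2; omega
        by_cases hc1 : 2 ≤ tau (c m).out.1
        · have := htau2 m hm (c m).out.1 hu1 (c m).out.2 hu2 ho hc1; omega
        · by_cases hc2 : 2 ≤ tau (c m).out.2
          · have := htau2 m hm (c m).out.2 hu2 (c m).out.1 hu1 (Ne.symm ho) hc2; omega
          · omega
    have hBup : B ≤ p * (n - I.card) + (I.card - p) * 2 := by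
      have h1 : B ≤ ∑ m ∈ I, (if strongp m then (n - I.card) else 2) := by
        rw [hedgesum]; exact Finset.sum_le_sum hperedge
      have h2 : ∑ m ∈ I, (if strongp m then (n - I.card) else 2)
          = p * (n - I.card) + (I.card - p) * 2 := by
        rw [Finset.sum_ite, Finset.sum_const, Finset.sum_const]
        simp only [smul_eq_mul]
        have hcards := Finset.card_filter_add_card_filter_not (s := I) (p := strongp)
        have hp' : (Finset.filter strongp I).card = p := by rw [hpdef, hSEdef]
        rw [hp']
        have : (Finset.filter (fun m => ¬ strongp m) I).card = I.card - p := by omega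
        rw [this]
      omega
    -- partner construction
    set Qprop : Fin n → V → Prop :=
      fun m v => v ∈ c m ∧ tau v = 0 ∧ ∃ u, u ∈ c m ∧ u ≠ v ∧ 3 ≤ tau u with hQdef
    have hSEI : ∀ m ∈ SE, m ∈ I := by
      intro m hm; rw [hSEdef] at hm; exact (Finset.mem_filter.mp hm).1
    have hQex : ∀ m ∈ SE, ∃ v, Qprop m v := by
      intro m hmSE
      have hmI := hSEI m hmSE
      have hms : strongp m := by rw [hSEdef] at hmSE; exact (Finset.mem_filter.mp hmSE).2
      simp only [hstrongdef] at hms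
      obtain ⟨u, huc, hu3⟩ := hms
      have ho := hout_ne m (c m) (hc m hmI)
      have hu1 : (c m).out.1 ∈ c m := Sym2.out_fst_mem (c m)
      have hu2 : (c m).out.2 ∈ c m := Sym2.out_snd_mem (c m)
      rcases sym2_mem_out_iff.mp huc with h | h
      · refine ⟨(c m).out.2, ?_⟩
        simp only [hQdef]
        exact ⟨hu2, htau2 m hmI (c m).out.1 hu1 (c m).out.2 hu2 ho (by rw [← h]; omega),
          u, huc, by rw [h]; exact ho, hu3⟩
      · refine ⟨(c m).out.1, ?_⟩
        simp only [hQdef]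
        exact ⟨hu1, htau2 m hmI (c m).out.2 hu2 (c m).out.1 hu1 (Ne.symm ho) (by rw [← h]; omega),
          u, huc, by rw [h]; exact Ne.symm ho, hu3⟩
    set pf : Fin n → V := fun m => if h : ∃ v, Qprop m v then h.choose else e0.out.1 with hpfdef
    have hpfQ : ∀ m ∈ SE, Qprop m (pf m) := by
      intro m hm
      have h := hQex m hm
      rw [hpfdef]; dsimp only; rw [dif_pos h]; exact h.choose_spec
    set P : Finset V := SE.image pf with hPdef
    have hPcard : P.card = p := by
      rw [hPdef, hpdef]
      apply Finset.card_image_of_injOn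
      intro a ha b hb hab
      by_contra hne
      have hQa := hpfQ a (Finset.mem_coe.mp ha)
      have hQb := hpfQ b (Finset.mem_coe.mp hb)
      simp only [hQdef] at hQa hQb
      exact hdisj a (hSEI a (Finset.mem_coe.mp ha)) b (hSEI b (Finset.mem_coe.mp hb)) hne
        (pf a) hQa.1 (by rw [hab]; exact hQb.1)
    have hPVs : P ⊆ Vs := by
      intro v hv
      rw [hPdef] at hv
      obtain ⟨m, hm, rfl⟩ := Finset.mem_image.mp hv
      have hQm := hpfQ m hm
      simp only [hQdef] at hQm
      exact (hVs (pf m)).mpr ⟨m, hSEI m hm, hQm.1⟩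
    have hPtau : ∀ v ∈ P, tau v = 0 := by
      intro v hv
      rw [hPdef] at hv
      obtain ⟨m, hm, rfl⟩ := Finset.mem_image.mp hv
      have hQm := hpfQ m hm
      simp only [hQdef] at hQm
      exact hQm.2.1
    -- Claim E: no edge of an unused colour joins two partner vertices
    have hE : ∀ i ∈ K, ∀ e ∈ F i, ∀ v, v ∈ e → ∀ v', v' ∈ e → v ≠ v' → v ∈ P → v' ∈ P →
        False := by
      intro i hiK e he v hv v' hv' hvv' hvP hv'P
      rw [hPdef] at hvP hv'P
      obtain ⟨m, hmSE, hpfm⟩ := Finset.mem_image.mp hvP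
      obtain ⟨m', hm'SE, hpfm'⟩ := Finset.mem_image.mp hv'P
      have hQm := hpfQ m hmSE
      have hQm' := hpfQ m' hm'SE
      simp only [hQdef] at hQm hQm'
      rw [hpfm] at hQm
      rw [hpfm'] at hQm'
      obtain ⟨hvc, htv, u, huc, hunv, hu3⟩ := hQm
      obtain ⟨hv'c, htv', u', hu'c, hu'nv', hu'3⟩ := hQm'
      have hmI := hSEI m hmSE
      have hm'I := hSEI m' hm'SE
      have he_eq : e = s(v, v') := sym2_eq_of_two_mem hv hv' hvv'
      have hmm' : m ≠ m' := by
        rintro rfl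
        have hcm : c m = s(v, v') := sym2_eq_of_two_mem hvc hv'c hvv'
        rw [hcm] at hu'c
        rcases Sym2.mem_iff.mp hu'c with h | h
        · rw [h] at hu'3; omega
        · exact hu'nv' h
      simp only [htaudef] at hu3 hu'3
      obtain ⟨j, hjmem, hjne⟩ := Finset.exists_mem_ne
        (by omega : 1 < (K.filter (fun t => touch t u)).card) i
      have hjK := (Finset.mem_filter.mp hjmem).1
      have hjt := (Finset.mem_filter.mp hjmem).2
      have hcard1 : 1 ≤ (((K.filter (fun t => touch t u')).erase i).erase j).card := by
        have e1 : (K.filter (fun t => touch t u')).card - 1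
            ≤ ((K.filter (fun t => touch t u')).erase i).card :=
          Finset.pred_card_le_card_erase
        have e2 : ((K.filter (fun t => touch t u')).erase i).card - 1
            ≤ (((K.filter (fun t => touch t u')).erase i).erase j).card :=
          Finset.pred_card_le_card_erase
        omega
      obtain ⟨j', hj'mem⟩ := Finset.card_pos.mp
        (show 0 < (((K.filter (fun t => touch t u')).erase i).erase j).card by omega)
      have hj'j : j' ≠ j := (Finset.mem_erase.mp hj'mem).1
      have hj'rest := (Finset.mem_erase.mp hj'mem).2
      have hj'i : j' ≠ i := (Finset.mem_erase.mp hj'rest).1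
      have hj'f := (Finset.mem_erase.mp hj'rest).2
      have hj'K := (Finset.mem_filter.mp hj'f).1
      have hj't := (Finset.mem_filter.mp hj'f).2
      obtain ⟨ej, hejF, huej, hextj⟩ := hjt
      obtain ⟨ej', hej'F, hu'ej', hextj'⟩ := hj't
      obtain ⟨y, hyej, hyu, hejy⟩ := hext j ej hejF u huej
      obtain ⟨y', hy'ej', hy'u', hej'y'⟩ := hext j' ej' hej'F u' hu'ej'
      have hyVs : y ∉ Vs := hextj y hyej hyu
      have hy'Vs : y' ∉ Vs := hextj' y' hy'ej' hy'u'
      have hvVs : v ∈ Vs := (hVs v).mpr ⟨m, hmI, hvc⟩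
      have hv'Vs : v' ∈ Vs := (hVs v').mpr ⟨m', hm'I, hv'c⟩
      have huVs : u ∈ Vs := (hVs u).mpr ⟨m, hmI, huc⟩
      have hu'Vs : u' ∈ Vs := (hVs u').mpr ⟨m', hm'I, hu'c⟩
      have hDm := hdisj m hmI m' hm'I hmm'
      have huu' : u ≠ u' := fun h => hDm u huc (by rw [h]; exact hu'c)
      have huv' : u ≠ v' := fun h => hDm u huc (by rw [h]; exact hv'c)
      have hvu' : v ≠ u' := fun h => hDm v hvc (by rw [h]; exact hu'c)
      have hvy : v ≠ y := fun h => hyVs (by rw [← h]; exact hvVs)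
      have he_mem : ∀ w, w ∈ e → w = v ∨ w = v' := by
        intro w hw; rw [he_eq] at hw; exact Sym2.mem_iff.mp hw
      have hej_mem : ∀ w, w ∈ ej → w = u ∨ w = y := by
        intro w hw; rw [hejy] at hw; exact Sym2.mem_iff.mp hw
      have hej'_mem : ∀ w, w ∈ ej' → w = u' ∨ w = y' := by
        intro w hw; rw [hej'y'] at hw; exact Sym2.mem_iff.mp hw
      by_cases hyy : y = y'
      · refine cyc5 G hfree (a := u) (b := v) (c := v') (d := u') (e := y)
          ?_ ?_ ?_ ?_ ?_ ?_ ?_ ?_ ?_ ?_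
        · exact hAdj m (c m) (hc m hmI) u v huc hvc (Ne.symm hunv).symm
        · exact hAdj i e he v v' hv hv' hvv'
        · exact hAdj m' (c m') (hc m' hm'I) v' u' hv'c hu'c (Ne.symm hu'nv')
        · exact hAdj j' ej' hej'F u' y hu'ej' (by rw [hyy]; exact hy'ej')
            (fun h => hyVs (by rw [← h]; exact hu'Vs))
        · exact (hAdj j ej hejF u y huej hyej (Ne.symm hyu)).symm
        · exact huv'
        · exact huu'
        · exact hvu'
        · exact hvy
        · exact fun h => hyVs (by rw [← h]; exact hv'Vs)
      · have hdisj_e_ej : ∀ w, w ∈ e → w ∈ ej → False := by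
          intro w h1 h2
          rcases he_mem w h1 with h3 | h3 <;> rcases hej_mem w h2 with h4 | h4
          · exact hunv (h4.symm.trans h3)
          · exact hyVs (by rw [← h4, h3]; exact hvVs)
          · exact huv' (h4.symm.trans h3)
          · exact hyVs (by rw [← h4, h3]; exact hv'Vs)
        have hdisj_e_ej' : ∀ w, w ∈ e → w ∈ ej' → False := by
          intro w h1 h2
          rcases he_mem w h1 with h3 | h3 <;> rcases hej'_mem w h2 with h4 | h4
          · exact hvu' (h3.symm.trans h4)
          · exact hy'Vs (by rw [← h4, h3]; exact hvVs)
          · exact hu'nv' (h3.symm.trans h4).symm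
          · exact hy'Vs (by rw [← h4, h3]; exact hv'Vs)
        have hdisj_ej_ej' : ∀ w, w ∈ ej → w ∈ ej' → False := by
          intro w h1 h2
          rcases hej_mem w h1 with h3 | h3 <;> rcases hej'_mem w h2 with h4 | h4
          · exact huu' (h3.symm.trans h4)
          · exact hy'Vs (by rw [← h4, h3]; exact huVs)
          · exact hyVs (by rw [← h3, h4]; exact hu'Vs)
          · exact hyy (h3.symm.trans h4)
        refine aug {m, m'} {i, j, j'}
          (fun t => if t = i then e else if t = j then ej else ej') ?_ ?_ ?_ ?_ ?_ ?_
        · intro t ht; rcases Finset.mem_insert.mp ht with h | h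
          · rw [h]; exact hmI
          · rw [Finset.mem_singleton.mp h]; exact hm'I
        · intro t ht
          rcases (by simpa using ht : t = i ∨ t = j ∨ t = j') with h | h | h
          · rw [h]; exact hKI i hiK
          · rw [h]; exact hKI j hjK
          · rw [h]; exact hKI j' hj'K
        · intro t ht
          rcases (by simpa using ht : t = i ∨ t = j ∨ t = j') with h | h | h
          · rw [h]; rw [if_pos rfl]; exact he
          · rw [h]; rw [if_neg hjne, if_pos rfl]; exact hejF
          · rw [h]; rw [if_neg hj'i, if_neg hj'j]; exact hej'F
        · intro a ha b hb hab w hwa hwb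
          rcases (by simpa using ha : a = i ∨ a = j ∨ a = j') with h1 | h1 | h1 <;>
            rcases (by simpa using hb : b = i ∨ b = j ∨ b = j') with h2 | h2 | h2 <;>
            rw [h1] at hwa <;> rw [h2] at hwb
          · rw [h1, h2] at hab; exact absurd rfl hab
          · rw [if_pos rfl] at hwa
            rw [if_neg hjne, if_pos rfl] at hwb
            exact hdisj_e_ej w hwa hwb
          · rw [if_pos rfl] at hwa
            rw [if_neg hj'i, if_neg hj'j] at hwb
            exact hdisj_e_ej' w hwa hwb
          · rw [if_neg hjne, if_pos rfl] at hwa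
            rw [if_pos rfl] at hwb
            exact hdisj_e_ej w hwb hwa
          · rw [h1, h2] at hab; exact absurd rfl hab
          · rw [if_neg hjne, if_pos rfl] at hwa
            rw [if_neg hj'i, if_neg hj'j] at hwb
            exact hdisj_ej_ej' w hwa hwb
          · rw [if_neg hj'i, if_neg hj'j] at hwa
            rw [if_pos rfl] at hwb
            exact hdisj_e_ej' w hwb hwa
          · rw [if_neg hj'i, if_neg hj'j] at hwa
            rw [if_neg hjne, if_pos rfl] at hwb
            exact hdisj_ej_ej' w hwb hwa
          · rw [h1, h2] at hab; exact absurd rfl hab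
        · intro t ht j'' hj'' hj''M w hw hwc
          have hj''m : j'' ≠ m := fun h => hj''M (by rw [h]; exact Finset.mem_insert_self m {m'})
          have hj''m' : j'' ≠ m' := fun h => hj''M
            (by rw [h]; exact Finset.mem_insert_of_mem (Finset.mem_singleton_self m'))
          have hwVs : w ∈ Vs := (hVs w).mpr ⟨j'', hj'', hwc⟩
          have hDm2 := hdisj m hmI j'' hj'' (Ne.symm hj''m)
          have hDm2' := hdisj m' hm'I j'' hj'' (Ne.symm hj''m')
          rcases (by simpa using ht : t = i ∨ t = j ∨ t = j') with h | h | h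
          · rw [h, if_pos rfl] at hw
            rcases he_mem w hw with h3 | h3
            · exact hDm2 v hvc (by rw [← h3]; exact hwc)
            · exact hDm2' v' hv'c (by rw [← h3]; exact hwc)
          · rw [h, if_neg hjne, if_pos rfl] at hw
            rcases hej_mem w hw with h3 | h3
            · exact hDm2 u huc (by rw [← h3]; exact hwc)
            · exact hyVs (by rw [← h3]; exact hwVs)
          · rw [h, if_neg hj'i, if_neg hj'j] at hw
            rcases hej'_mem w hw with h3 | h3
            · exact hDm2' u' hu'c (by rw [← h3]; exact hwc)
            · exact hy'Vs (by rw [← h3]; exact hwVs)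
        · have hi_not : i ∉ ({j, j'} : Finset (Fin n)) := by
            simp only [Finset.mem_insert, Finset.mem_singleton]
            push_neg
            exact ⟨Ne.symm hjne, Ne.symm hj'i⟩
          have hj_not : j ∉ ({j'} : Finset (Fin n)) := by
            simp only [Finset.mem_singleton]
            exact Ne.symm hj'j
          rw [Finset.card_insert_of_notMem (by simp [hmm']), Finset.card_singleton,
            Finset.card_insert_of_notMem hi_not, Finset.card_insert_of_notMem hj_not,
            Finset.card_singleton]
          omega
    -- coverage counting
    set cover : Fin n → V → Prop := fun i v => ∃ e ∈ F i, v ∈ e with hcoverdef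
    set iot : V → ℕ := fun v => (K.filter (fun i => cover i v)).card with hiotdef
    have hiot_le : ∀ v, iot v ≤ n - I.card := by
      intro v
      rw [hiotdef]
      calc (K.filter (fun i => cover i v)).card ≤ K.card :=
        Finset.card_le_card (Finset.filter_subset _ _)
      _ = n - I.card := hKcard
    have hswapI : ∑ v ∈ Vs, iot v = ∑ i ∈ K, (Vs.filter (fun v => cover i v)).card := by
      rw [hiotdef]
      rw [Finset.sum_congr rfl (fun v _ => Finset.card_filter (fun i => cover i v) K)]
      rw [Finset.sum_comm]
      exact Finset.sum_congr rfl (fun i _ => (Finset.card_filter _ _).symm)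
    have hIot_i : ∀ i ∈ K, (Vs.filter (fun v => cover i v)).card
        = (E1 i).card + 2 * (E2 i).card := by
      intro i hi
      have hset : Vs.filter (fun v => cover i v) = (F i).biUnion Se := by
        ext v
        simp only [Finset.mem_filter, Finset.mem_biUnion, hcoverdef]
        constructor
        · rintro ⟨hvVs, e, heF, hve⟩
          exact ⟨e, heF, (hSemem e v).mpr ⟨hve, hvVs⟩⟩
        · rintro ⟨e, heF, hv⟩
          obtain ⟨hve, hvVs⟩ := (hSemem e v).mp hv
          exact ⟨hvVs, e, heF, hve⟩
      rw [hset, Finset.card_biUnion (hSedisj i)]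
      exact hsumSe i hi
    have hswapP : ∑ v ∈ P, iot v = ∑ i ∈ K, (P.filter (fun v => cover i v)).card := by
      rw [hiotdef]
      rw [Finset.sum_congr rfl (fun v _ => Finset.card_filter (fun i => cover i v) K)]
      rw [Finset.sum_comm]
      exact Finset.sum_congr rfl (fun i _ => (Finset.card_filter _ _).symm)
    have hPi : ∀ i ∈ K, (P.filter (fun v => cover i v)).card ≤ (E2 i).card := by
      intro i hi
      set g : V → Sym2 V := fun v => if h : ∃ e, e ∈ F i ∧ v ∈ e then h.choose else e0 with hgdef
      have hgspec : ∀ v ∈ P.filter (fun v => cover i v), g v ∈ F i ∧ v ∈ g v := by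
        intro v hv
        have hcov := (Finset.mem_filter.mp hv).2
        simp only [hcoverdef] at hcov
        obtain ⟨e, h1, h2⟩ := hcov
        have hex : ∃ e, e ∈ F i ∧ v ∈ e := ⟨e, h1, h2⟩
        rw [hgdef]; dsimp only; rw [dif_pos hex]; exact hex.choose_spec
      apply Finset.card_le_card_of_injOn g
      · intro v hv
        obtain ⟨hgF, hvg⟩ := hgspec v hv
        have hvP : v ∈ P := (Finset.mem_filter.mp hv).1
        obtain ⟨w, hwg, hwv, hgeq⟩ := hext i (g v) hgF v hvg
        have hwVs : w ∈ Vs := by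
          by_contra hwVs
          have htouch : touch i v := by
            simp only [htouchdef]
            refine ⟨g v, hgF, hvg, ?_⟩
            intro w' hw' hw'ne
            rcases (by rw [hgeq] at hw'; exact Sym2.mem_iff.mp hw' : w' = v ∨ w' = w) with h | h
            · exact absurd h hw'ne
            · rw [h]; exact hwVs
          have h1 : 1 ≤ tau v := by
            simp only [htaudef]
            exact Finset.card_pos.mpr ⟨i, Finset.mem_filter.mpr ⟨hi, htouch⟩⟩
          have h0 := hPtau v hvP
          omega
        have hvVs : v ∈ Vs := hPVs hvP
        have hsub : ({v, w} : Finset V) ⊆ Se (g v) := by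
          intro z hz
          rcases Finset.mem_insert.mp hz with h | h
          · rw [h]; exact (hSemem _ v).mpr ⟨hvg, hvVs⟩
          · rw [Finset.mem_singleton.mp h]; exact (hSemem _ w).mpr ⟨hwg, hwVs⟩
        have h2 : 2 ≤ (Se (g v)).card := by
          calc 2 = ({v, w} : Finset V).card := (Finset.card_pair (Ne.symm hwv)).symm
          _ ≤ _ := Finset.card_le_card hsub
        have h3 := hSecard (g v)
        rw [hE2def]
        exact Finset.mem_filter.mpr ⟨hgF, by omega⟩
      · intro v hv v' hv' hgeq2
        by_contra hne
        obtain ⟨hgF, hvg⟩ := hgspec v (Finset.mem_coe.mp hv)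
        obtain ⟨hgF', hv'g⟩ := hgspec v' (Finset.mem_coe.mp hv')
        rw [← hgeq2] at hv'g
        exact hE i hi (g v) hgF v hvg v' hv'g hne
          (Finset.mem_filter.mp (Finset.mem_coe.mp hv)).1
          (Finset.mem_filter.mp (Finset.mem_coe.mp hv')).1
    have hPsum : ∑ v ∈ P, iot v ≤ ∑ i ∈ K, (E2 i).card := by
      rw [hswapP]
      exact Finset.sum_le_sum hPi
    have hrest : ∑ v ∈ Vs \ P, iot v ≤ (2 * I.card - p) * (n - I.card) := by
      have hcardsd : (Vs \ P).card = 2 * I.card - p := by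
        rw [Finset.card_sdiff_of_subset hPVs, hVscard, hPcard]
      calc ∑ v ∈ Vs \ P, iot v ≤ (Vs \ P).card • (n - I.card) :=
            Finset.sum_le_card_nsmul _ _ _ (fun v _ => hiot_le v)
      _ = (2 * I.card - p) * (n - I.card) := by rw [smul_eq_mul, hcardsd]
    have htotal : ∑ v ∈ Vs, iot v = ∑ v ∈ Vs \ P, iot v + ∑ v ∈ P, iot v :=
      (Finset.sum_sdiff hPVs).symm
    have htot2 : (n - I.card) * n + ∑ i ∈ K, (E2 i).card = ∑ v ∈ Vs, iot v := by
      rw [hswapI]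
      rw [Finset.sum_congr rfl (fun i hi => hIot_i i hi)]
      have hthis : ∑ i ∈ K, ((E1 i).card + 2 * (E2 i).card)
          = ∑ i ∈ K, (n + (E2 i).card) := by
        apply Finset.sum_congr rfl
        intro i hi
        have := hf1 i hi
        omega
      rw [hthis, Finset.sum_add_distrib, Finset.sum_const, smul_eq_mul, hKcard]
    have hnp : n + p ≤ 2 * I.card := by
      have h1 : (n - I.card) * n + ∑ i ∈ K, (E2 i).card
          ≤ (2 * I.card - p) * (n - I.card) + ∑ i ∈ K, (E2 i).card := by
        rw [htot2, htotal]
        have := add_le_add hrest hPsum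
        omega
      have h2 : (n - I.card) * n ≤ (2 * I.card - p) * (n - I.card) :=
        le_of_add_le_add_right h1
      rw [mul_comm (2 * I.card - p) (n - I.card)] at h2
      have h3 : n ≤ 2 * I.card - p :=
        Nat.le_of_mul_le_mul_left h2 (by omega)
      have hp2q : p ≤ 2 * I.card := by
        rw [← hPcard]
        exact le_trans (Finset.card_le_card hPVs) (le_of_eq hVscard)
      omega
    -- final arithmetic
    have hpk : p + (n - I.card) ≤ I.card := by omega
    have h4 : p * (n - I.card) + (n - I.card) * (n - I.card) ≤ I.card * (n - I.card) := by
      have := Nat.mul_le_mul_right (n - I.card) hpk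
      rwa [add_mul] at this
    have hBup2 : B + 2 * p ≤ p * (n - I.card) + 2 * I.card := by omega
    nlinarith [hBlow, hBup2, h4]
end
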